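/- arXiv:2109.05552 — 6 statements merged into one kernel-verified Lean document; each statement's English description precedes it below -/
import Mathlib

section
/- Let H and M be n×n complex Hermitian matrices, and let P⁺ and P⁻ denote the orthogonal projections onto the strictly positive and strictly negative eigenspaces of H, respectively. Then 2P⁺ − I ⪯ M ⪯ I − 2P⁻ if and only if ‖M‖ ≤ 1 and Tr(HM) = ‖H‖_tr, where ‖·‖ is the operator norm and ‖·‖_tr is the trace norm. -/
open Matrix BigOperators

/-- The trace norm of a complex square matrix: the sum of its singular values. -/
noncomputable def traceNorm {m : Type*} [Fintype m] [DecidableEq m] (A : Matrix m m ℂ) : ℝ :=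
  ∑ i, Real.sqrt ((Matrix.isHermitian_conjTranspose_mul_self A).eigenvalues i)

/-- The operator norm of a complex square matrix: its largest singular value. -/
noncomputable def opNorm {m : Type*} [Fintype m] [DecidableEq m] (A : Matrix m m ℂ) : ℝ :=
  ⨆ i, Real.sqrt ((Matrix.isHermitian_conjTranspose_mul_self A).eigenvalues i)

/-- The orthogonal projection onto the strictly positive eigenspace of a Hermitian matrix. -/
noncomputable def posProj {n : ℕ} {H : Matrix (Fin n) (Fin n) ℂ} (hH : H.IsHermitian) :
    Matrix (Fin n) (Fin n) ℂ :=
  (hH.eigenvectorUnitary : Matrix (Fin n) (Fin n) ℂ) *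
    Matrix.diagonal (fun i => if 0 < hH.eigenvalues i then (1 : ℂ) else 0) *
    (star (hH.eigenvectorUnitary : Matrix (Fin n) (Fin n) ℂ))

/-- The orthogonal projection onto the strictly negative eigenspace of a Hermitian matrix. -/
noncomputable def negProj {n : ℕ} {H : Matrix (Fin n) (Fin n) ℂ} (hH : H.IsHermitian) :
    Matrix (Fin n) (Fin n) ℂ :=
  (hH.eigenvectorUnitary : Matrix (Fin n) (Fin n) ℂ) *
    Matrix.diagonal (fun i => if hH.eigenvalues i < 0 then (1 : ℂ) else 0) *
    (star (hH.eigenvectorUnitary : Matrix (Fin n) (Fin n) ℂ))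

/-- The orthogonal projection onto the range of a Hermitian matrix. -/
noncomputable def rangeProj {n : ℕ} {H : Matrix (Fin n) (Fin n) ℂ} (hH : H.IsHermitian) :
    Matrix (Fin n) (Fin n) ℂ :=
  (hH.eigenvectorUnitary : Matrix (Fin n) (Fin n) ℂ) *
    Matrix.diagonal (fun i => if hH.eigenvalues i ≠ 0 then (1 : ℂ) else 0) *
    (star (hH.eigenvectorUnitary : Matrix (Fin n) (Fin n) ℂ))

/-- `A` is Birkhoff–James orthogonal to `B` in the trace norm. -/
noncomputable def BJOrth {m : Type*} [Fintype m] [DecidableEq m] (A B : Matrix m m ℂ) : Prop :=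
  ∀ l : ℝ, traceNorm A ≤ traceNorm (A + (l : ℂ) • B)

/-- The principal submatrix of `A` indexed by the finite set `s`. -/
def principalSub {n : ℕ} (A : Matrix (Fin n) (Fin n) ℂ) (s : Finset (Fin n)) :
    Matrix {i // i ∈ s} {i // i ∈ s} ℂ :=
  A.submatrix (fun i => (i : Fin n)) (fun i => (i : Fin n))

open scoped ComplexOrder

variable {n : ℕ}

/-- conjugation by a unitary preserves PSD (iff form) -/
lemma my_conj_psd_iff {U A : Matrix (Fin n) (Fin n) ℂ}
    (h1 : star U * U = 1) (h2 : U * star U = 1) :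
    (star U * A * U).PosSemidef ↔ A.PosSemidef := by
  constructor
  · intro h
    have := h.mul_mul_conjTranspose_same U
    rwa [← Matrix.star_eq_conjTranspose, ← mul_assoc, ← mul_assoc, h2, one_mul,
      mul_assoc, h2, mul_one] at this
  · intro h
    have := h.conjTranspose_mul_mul_same U
    rwa [← Matrix.star_eq_conjTranspose] at this

lemma my_psd_diag_nonneg {A : Matrix (Fin n) (Fin n) ℂ} (hA : A.PosSemidef) (i : Fin n) :
    0 ≤ A i i := by
  exact hA.diag_nonneg

lemma my_star_mul_self_mul_eq_diagonal {A : Matrix (Fin n) (Fin n) ℂ} (hA : A.IsHermitian) :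
    star (hA.eigenvectorUnitary : Matrix (Fin n) (Fin n) ℂ) * A *
      (hA.eigenvectorUnitary : Matrix (Fin n) (Fin n) ℂ) = diagonal (RCLike.ofReal ∘ hA.eigenvalues) := by
  have := hA.conjStarAlgAut_star_eigenvectorUnitary
  simp only [Unitary.conjStarAlgAut_apply, Unitary.coe_star, star_star] at this
  exact this

lemma my_one_sub_psd_iff {A : Matrix (Fin n) (Fin n) ℂ} (hA : A.IsHermitian) :
    (1 - A).PosSemidef ↔ ∀ i, hA.eigenvalues i ≤ 1 := by
  set U : Matrix (Fin n) (Fin n) ℂ := (hA.eigenvectorUnitary : Matrix (Fin n) (Fin n) ℂ)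
  have h1 : star U * U = 1 := Unitary.coe_star_mul_self _
  have h2 : U * star U = 1 := Unitary.coe_mul_star_self _
  rw [← my_conj_psd_iff h1 h2]
  have key : star U * (1 - A) * U
      = diagonal (fun i => 1 - (hA.eigenvalues i : ℂ)) := by
    rw [mul_sub, sub_mul, mul_one, h1, my_star_mul_self_mul_eq_diagonal hA]
    rw [← diagonal_one, diagonal_sub]
    rfl
  rw [key, posSemidef_diagonal_iff]
  constructor
  · intro h i
    have := h i
    rw [show (1 - (hA.eigenvalues i : ℂ)) = ((1 - hA.eigenvalues i : ℝ) : ℂ) by push_cast; ring,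
      Complex.zero_le_real] at this
    linarith
  · intro h i
    rw [show (1 - (hA.eigenvalues i : ℂ)) = ((1 - hA.eigenvalues i : ℝ) : ℂ) by push_cast; ring,
      Complex.zero_le_real]
    linarith [h i]

lemma my_one_add_psd_iff {A : Matrix (Fin n) (Fin n) ℂ} (hA : A.IsHermitian) :
    (1 + A).PosSemidef ↔ ∀ i, -1 ≤ hA.eigenvalues i := by
  set U : Matrix (Fin n) (Fin n) ℂ := (hA.eigenvectorUnitary : Matrix (Fin n) (Fin n) ℂ)
  have h1 : star U * U = 1 := Unitary.coe_star_mul_self _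
  have h2 : U * star U = 1 := Unitary.coe_mul_star_self _
  rw [← my_conj_psd_iff h1 h2]
  have key : star U * (1 + A) * U
      = diagonal (fun i => 1 + (hA.eigenvalues i : ℂ)) := by
    rw [mul_add, add_mul, mul_one, h1, my_star_mul_self_mul_eq_diagonal hA]
    rw [← diagonal_one, diagonal_add]
    rfl
  rw [key, posSemidef_diagonal_iff]
  constructor
  · intro h i
    have := h i
    rw [show (1 + (hA.eigenvalues i : ℂ)) = ((1 + hA.eigenvalues i : ℝ) : ℂ) by push_cast; ring,
      Complex.zero_le_real] at this
    linarith
  · intro h i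
    rw [show (1 + (hA.eigenvalues i : ℂ)) = ((1 + hA.eigenvalues i : ℝ) : ℂ) by push_cast; ring,
      Complex.zero_le_real]
    linarith [h i]

lemma my_one_sub_sq_psd_iff {A : Matrix (Fin n) (Fin n) ℂ} (hA : A.IsHermitian) :
    (1 - A * A).PosSemidef ↔ ((1 - A).PosSemidef ∧ (1 + A).PosSemidef) := by
  set U : Matrix (Fin n) (Fin n) ℂ := (hA.eigenvectorUnitary : Matrix (Fin n) (Fin n) ℂ)
  have h1 : star U * U = 1 := Unitary.coe_star_mul_self _
  have h2 : U * star U = 1 := Unitary.coe_mul_star_self _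
  rw [← my_conj_psd_iff (A := 1 - A * A) h1 h2, my_one_sub_psd_iff hA, my_one_add_psd_iff hA]
  have hAA : star U * (A * A) * U = (star U * A * U) * (star U * A * U) := by
    simp only [← mul_assoc]
    rw [mul_assoc (star U * A) U (star U), h2, mul_one]
  have key : star U * (1 - A * A) * U
      = diagonal (fun i => 1 - (hA.eigenvalues i : ℂ) * (hA.eigenvalues i : ℂ)) := by
    rw [mul_sub, sub_mul, mul_one, h1, hAA, my_star_mul_self_mul_eq_diagonal hA,
      diagonal_mul_diagonal, ← diagonal_one, diagonal_sub]
    rfl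
  rw [key, posSemidef_diagonal_iff]
  constructor
  · intro h
    constructor <;> intro i <;>
    · have := h i
      rw [show (1 - (hA.eigenvalues i : ℂ) * (hA.eigenvalues i : ℂ))
          = ((1 - hA.eigenvalues i * hA.eigenvalues i : ℝ) : ℂ) by push_cast; ring,
        Complex.zero_le_real] at this
      nlinarith [sq_nonneg (hA.eigenvalues i - 1), sq_nonneg (hA.eigenvalues i + 1)]
  · rintro ⟨hs, ha⟩ i
    rw [show (1 - (hA.eigenvalues i : ℂ) * (hA.eigenvalues i : ℂ))
        = ((1 - hA.eigenvalues i * hA.eigenvalues i : ℝ) : ℂ) by push_cast; ring,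
      Complex.zero_le_real]
    nlinarith [hs i, ha i]

lemma my_opNorm_le_one_iff {M : Matrix (Fin n) (Fin n) ℂ} (hM : M.IsHermitian) :
    opNorm M ≤ 1 ↔ ((1 - M).PosSemidef ∧ (1 + M).PosSemidef) := by
  have hMM : Mᴴ * M = M * M := by rw [hM.eq]
  have key : (∀ i, (Matrix.isHermitian_conjTranspose_mul_self M).eigenvalues i ≤ 1)
      ↔ ((1 - M).PosSemidef ∧ (1 + M).PosSemidef) := by
    rw [← my_one_sub_psd_iff (Matrix.isHermitian_conjTranspose_mul_self M),
      show (1 - Mᴴ * M) = 1 - M * M by rw [hMM], my_one_sub_sq_psd_iff hM]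
  rw [← key]
  unfold opNorm
  rcases Nat.eq_zero_or_pos n with hn | hn
  · subst hn
    simp [Real.iSup_of_isEmpty]
  · haveI : Nonempty (Fin n) := ⟨⟨0, hn⟩⟩
    rw [ciSup_le_iff (Set.Finite.bddAbove (Set.finite_range _))]
    constructor
    · intro h i
      have := h i
      have h0 := Matrix.eigenvalues_conjTranspose_mul_self_nonneg M i
      nlinarith [Real.sq_sqrt h0, Real.sqrt_nonneg ((Matrix.isHermitian_conjTranspose_mul_self M).eigenvalues i)]
    · intro h i
      rw [show (1:ℝ) = Real.sqrt 1 by simp]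
      exact Real.sqrt_le_sqrt (h i)

open scoped MatrixOrder in
lemma my_psd_row_zero {A : Matrix (Fin n) (Fin n) ℂ} (hA : A.PosSemidef) (i : Fin n)
    (h : A i i = 0) (j : Fin n) : A i j = 0 ∧ A j i = 0 := by
  set s := CFC.sqrt A with hs
  have hherm : s.IsHermitian := (Matrix.nonneg_iff_posSemidef.mp (CFC.sqrt_nonneg A)).1
  have hmul : s * s = A := CFC.sqrt_mul_sqrt_self A hA.nonneg
  have hii : ∑ k, Complex.normSq (s i k) = 0 := by
    have : A i i = ∑ k, s i k * s k i := by rw [← hmul, Matrix.mul_apply]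
    have e : ∀ k, s i k * s k i = (Complex.normSq (s i k) : ℂ) := by
      intro k
      rw [show s k i = star (s i k) by rw [← hherm.apply k i]]
      exact Complex.mul_conj _
    rw [h] at this
    have : (0:ℂ) = ((∑ k, Complex.normSq (s i k) : ℝ) : ℂ) := by
      rw [this, Finset.sum_congr rfl (fun k _ => e k)]
      push_cast
      ring
    exact_mod_cast this.symm
  have hrow : ∀ k, s i k = 0 := by
    intro k
    have := (Finset.sum_eq_zero_iff_of_nonneg (fun k _ => Complex.normSq_nonneg (s i k))).mp hii k
      (Finset.mem_univ k)
    exact Complex.normSq_eq_zero.mp this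
  have hij : A i j = 0 := by
    rw [← hmul, Matrix.mul_apply]
    exact Finset.sum_eq_zero fun k _ => by rw [hrow k, zero_mul]
  refine ⟨hij, ?_⟩
  rw [← hA.1.apply j i]
  · rw [show A i j = 0 from hij]; simp

lemma my_core (lam : Fin n → ℝ) {N : Matrix (Fin n) (Fin n) ℂ} (hN : N.IsHermitian) :
    ((N - (2 • diagonal (fun i => if 0 < lam i then (1:ℂ) else 0) - 1)).PosSemidef ∧
     ((1 - 2 • diagonal (fun i => if lam i < 0 then (1:ℂ) else 0)) - N).PosSemidef) ↔
    (((1 - N).PosSemidef ∧ (1 + N).PosSemidef) ∧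
      ∑ i, (lam i : ℂ) * N i i = ∑ i, ((|lam i| : ℝ) : ℂ)) := by
  set dp : Fin n → ℂ := fun i => if 0 < lam i then (1:ℂ) else 0 with hdp
  set dm : Fin n → ℂ := fun i => if lam i < 0 then (1:ℂ) else 0 with hdm
  have hQp2 : (diagonal dp + diagonal dp).PosSemidef := by
    rw [diagonal_add]
    exact posSemidef_diagonal_iff.mpr fun i => by
      show (0:ℂ) ≤ dp i + dp i
      rw [hdp]; dsimp only; split_ifs <;> norm_num
  have hQm2 : (diagonal dm + diagonal dm).PosSemidef := by
    rw [diagonal_add]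
    exact posSemidef_diagonal_iff.mpr fun i => by
      show (0:ℂ) ≤ dm i + dm i
      rw [hdm]; dsimp only; split_ifs <;> norm_num
  have ep : ∀ i, 0 < lam i → (N - (2 • diagonal dp - 1) : Matrix (Fin n) (Fin n) ℂ) i i = N i i - 1 := by
    intro i h0
    simp only [Matrix.sub_apply, Matrix.smul_apply, diagonal_apply_eq, Matrix.one_apply_eq,
      hdp, if_pos h0, smul_eq_mul, Nat.cast_ofNat, mul_one]
    norm_num
  have em : ∀ i, lam i < 0 → ((1 - 2 • diagonal dm) - N : Matrix (Fin n) (Fin n) ℂ) i i = -1 - N i i := by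
    intro i h0
    simp only [Matrix.sub_apply, Matrix.smul_apply, diagonal_apply_eq, Matrix.one_apply_eq,
      hdm, if_pos h0, smul_eq_mul, Nat.cast_ofNat, mul_one]
    norm_num
  constructor
  · rintro ⟨hp, hm⟩
    have hplus : (1 + N).PosSemidef := by
      have e : 1 + N = (N - (2 • diagonal dp - 1)) + (diagonal dp + diagonal dp) := by
        rw [two_smul]; abel
      rw [e]; exact hp.add hQp2
    have hminus : (1 - N).PosSemidef := by
      have e : 1 - N = ((1 - 2 • diagonal dm) - N) + (diagonal dm + diagonal dm) := by
        rw [two_smul]; abel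
      rw [e]; exact hm.add hQm2
    have hdiag : ∀ i, (0 < lam i → N i i = 1) ∧ (lam i < 0 → N i i = -1) := by
      intro i
      constructor
      · intro h0
        have a1 := my_psd_diag_nonneg hp i
        rw [ep i h0, sub_nonneg] at a1
        have a2 := my_psd_diag_nonneg hminus i
        rw [Matrix.sub_apply, Matrix.one_apply_eq, sub_nonneg] at a2
        exact le_antisymm a2 a1
      · intro h0
        have a1 := my_psd_diag_nonneg hm i
        rw [em i h0, sub_nonneg] at a1
        have a2 := my_psd_diag_nonneg hplus i
        rw [Matrix.add_apply, Matrix.one_apply_eq] at a2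
        have a2' : (-1 : ℂ) ≤ N i i := by
          rw [show (-1:ℂ) = 0 - 1 by ring]
          rw [sub_le_iff_le_add]
          rwa [add_comm] at a2
        exact le_antisymm a1 a2'
    refine ⟨⟨hminus, hplus⟩, ?_⟩
    refine Finset.sum_congr rfl fun i _ => ?_
    rcases lt_trichotomy (lam i) 0 with h0 | h0 | h0
    · rw [(hdiag i).2 h0, abs_of_neg h0]; push_cast; ring
    · rw [h0]; simp
    · rw [(hdiag i).1 h0, abs_of_pos h0]; push_cast; ring
  · rintro ⟨⟨hs, ha⟩, htr⟩
    -- diagonal entries are real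
    have hre : ∀ i, N i i = ((N i i).re : ℂ) := by
      intro i
      have := hN.apply i i
      exact (Complex.conj_eq_iff_re.mp this).symm
    set r : Fin n → ℝ := fun i => (N i i).re with hr
    have hb1 : ∀ i, r i ≤ 1 := by
      intro i
      have a2 := my_psd_diag_nonneg hs i
      rw [Matrix.sub_apply, Matrix.one_apply_eq, sub_nonneg, hre i] at a2
      exact_mod_cast Complex.real_le_real.mp (by exact_mod_cast a2)
    have hb2 : ∀ i, -1 ≤ r i := by
      intro i
      have a2 := my_psd_diag_nonneg ha i
      rw [Matrix.add_apply, Matrix.one_apply_eq] at a2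
      have : (-1 : ℂ) ≤ N i i := by
        rw [show (-1:ℂ) = 0 - 1 by ring, sub_le_iff_le_add]
        rwa [add_comm] at a2
      rw [hre i] at this
      exact_mod_cast Complex.real_le_real.mp (by exact_mod_cast this)
    -- real version of the trace condition
    have hsum : ∑ i, lam i * r i = ∑ i, |lam i| := by
      have htr' : ((∑ i, lam i * r i : ℝ) : ℂ) = ((∑ i, |lam i| : ℝ) : ℂ) := by
        push_cast
        rw [← htr]
        exact Finset.sum_congr rfl fun i _ => by rw [hre i]
      exact_mod_cast htr'
    have hle : ∀ i ∈ Finset.univ, lam i * r i ≤ |lam i| := by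
      intro i _
      calc lam i * r i ≤ |lam i * r i| := le_abs_self _
        _ = |lam i| * |r i| := abs_mul _ _
        _ ≤ |lam i| * 1 := by
            apply mul_le_mul_of_nonneg_left _ (abs_nonneg _)
            exact abs_le.mpr ⟨hb2 i, hb1 i⟩
        _ = |lam i| := mul_one _
    have heq : ∀ i ∈ Finset.univ, lam i * r i = |lam i| :=
      (Finset.sum_eq_sum_iff_of_le hle).mp hsum
    have hdiag : ∀ i, (0 < lam i → N i i = 1) ∧ (lam i < 0 → N i i = -1) := by
      intro i
      have h := heq i (Finset.mem_univ i)
      constructor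
      · intro h0
        rw [abs_of_pos h0] at h
        have : r i = 1 := by
          have h' : lam i * r i = lam i * 1 := by rw [h, mul_one]
          exact mul_left_cancel₀ (ne_of_gt h0) h'
        rw [hre i, show (N i i).re = (1:ℝ) from this]; norm_num
      · intro h0
        rw [abs_of_neg h0] at h
        have : r i = -1 := by
          have h' : lam i * r i = lam i * (-1) := by rw [h]; ring
          exact mul_left_cancel₀ (ne_of_lt h0) h'
        rw [hre i, show (N i i).re = (-1:ℝ) from this]; norm_num
    -- rows supported away from the projections
    have hrowp : ∀ i, 0 < lam i → ∀ j, N i j = (1 : Matrix (Fin n) (Fin n) ℂ) i j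
        ∧ N j i = (1 : Matrix (Fin n) (Fin n) ℂ) j i := by
      intro i h0 j
      have hz : (1 - N : Matrix (Fin n) (Fin n) ℂ) i i = 0 := by
        rw [Matrix.sub_apply, Matrix.one_apply_eq, (hdiag i).1 h0]; ring
      obtain ⟨e1, e2⟩ := my_psd_row_zero hs i hz j
      constructor
      · rw [Matrix.sub_apply] at e1
        linear_combination -e1
      · rw [Matrix.sub_apply] at e2
        linear_combination -e2
    have hrowm : ∀ i, lam i < 0 → ∀ j, N i j = -(1 : Matrix (Fin n) (Fin n) ℂ) i j
        ∧ N j i = -(1 : Matrix (Fin n) (Fin n) ℂ) j i := by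
      intro i h0 j
      have hz : (1 + N : Matrix (Fin n) (Fin n) ℂ) i i = 0 := by
        rw [Matrix.add_apply, Matrix.one_apply_eq, (hdiag i).2 h0]; ring
      obtain ⟨e1, e2⟩ := my_psd_row_zero ha i hz j
      constructor
      · rw [Matrix.add_apply] at e1
        linear_combination e1
      · rw [Matrix.add_apply] at e2
        linear_combination e2
    constructor
    · -- N - (2 Q⁺ - 1) = C (1+N) C with C = diagonal (1 - dp)
      set c : Fin n → ℂ := fun i => if 0 < lam i then (0:ℂ) else 1 with hc
      have hCstar : (diagonal c)ᴴ = diagonal c := by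
        have hstar : star c = c := by
          funext i
          simp only [Pi.star_apply, hc]
          split_ifs <;> simp
        rw [diagonal_conjTranspose, hstar]
      have hpsd := ha.mul_mul_conjTranspose_same (diagonal c)
      rw [hCstar] at hpsd
      have e : N - (2 • diagonal dp - 1) = diagonal c * (1 + N) * diagonal c := by
        ext i j
        rw [Matrix.mul_diagonal, Matrix.diagonal_mul, Matrix.sub_apply, Matrix.sub_apply,
          Matrix.smul_apply, diagonal_apply, Matrix.one_apply, Matrix.add_apply,
          Matrix.one_apply, hdp, hc]
        dsimp only
        by_cases hi : 0 < lam i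
        · have hNij := (hrowp i hi j).1
          rw [Matrix.one_apply] at hNij
          rw [hNij]
          by_cases hij : i = j
          · subst hij; simp [hi]; try norm_num
          · simp [hij, hi]
        · by_cases hj : 0 < lam j
          · have hij : i ≠ j := fun h => hi (h ▸ hj)
            have hNij := (hrowp j hj i).2
            rw [Matrix.one_apply, if_neg hij] at hNij
            rw [hNij]
            simp [hij, hi, hj]
          · by_cases hij : i = j
            · subst hij; simp [hi, hj]; try ring
            · simp [hij, hi, hj]; try ring
      rw [e]
      exact hpsd
    · -- (1 - 2 Q⁻) - N = C (1-N) C with C = diagonal (1 - dm)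
      set c : Fin n → ℂ := fun i => if lam i < 0 then (0:ℂ) else 1 with hc
      have hCstar : (diagonal c)ᴴ = diagonal c := by
        have hstar : star c = c := by
          funext i
          simp only [Pi.star_apply, hc]
          split_ifs <;> simp
        rw [diagonal_conjTranspose, hstar]
      have hpsd := hs.mul_mul_conjTranspose_same (diagonal c)
      rw [hCstar] at hpsd
      have e : (1 - 2 • diagonal dm) - N = diagonal c * (1 - N) * diagonal c := by
        ext i j
        rw [Matrix.mul_diagonal, Matrix.diagonal_mul, Matrix.sub_apply, Matrix.sub_apply,
          Matrix.smul_apply, diagonal_apply, Matrix.one_apply, Matrix.sub_apply,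
          Matrix.one_apply, hdm, hc]
        dsimp only
        by_cases hi : lam i < 0
        · have hNij := (hrowm i hi j).1
          rw [Matrix.one_apply] at hNij
          rw [hNij]
          by_cases hij : i = j
          · subst hij; simp [hi]; try norm_num
          · simp [hij, hi]
        · by_cases hj : lam j < 0
          · have hij : i ≠ j := fun h => hi (h ▸ hj)
            have hNij := (hrowm j hj i).2
            rw [Matrix.one_apply, if_neg hij] at hNij
            rw [hNij]
            simp [hij, hi, hj]
          · by_cases hij : i = j
            · subst hij; simp [hi, hj]; try ring
            · simp [hij, hi, hj]; try ring
      rw [e]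
      exact hpsd

lemma my_key_conj {U : Matrix (Fin n) (Fin n) ℂ} (h1 : star U * U = 1)
    (Q : Matrix (Fin n) (Fin n) ℂ) : star U * (U * Q * star U) * U = Q := by
  simp only [← Matrix.mul_assoc]
  rw [h1, one_mul, Matrix.mul_assoc, h1, mul_one]

lemma my_trace_conj {U : Matrix (Fin n) (Fin n) ℂ} (h1 : star U * U = 1)
    (d : Fin n → ℂ) : (U * diagonal d * star U).trace = ∑ i, d i := by
  rw [Matrix.trace_mul_comm, ← Matrix.mul_assoc, h1, one_mul, Matrix.trace_diagonal]

open scoped MatrixOrder in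
lemma my_sqrt_trace (H S : Matrix (Fin n) (Fin n) ℂ) (hS : S.PosSemidef) (hsq : S ^ 2 = Hᴴ * H) :
    S.trace = ∑ i, ((Real.sqrt ((Matrix.isHermitian_conjTranspose_mul_self H).eigenvalues i) : ℝ) : ℂ) := by
  have hpsd2 : (Hᴴ * H).PosSemidef := Matrix.posSemidef_conjTranspose_mul_self H
  have hS' : CFC.sqrt (Hᴴ * H) = S :=
    (CFC.sqrt_eq_iff _ _ hpsd2.nonneg hS.nonneg).mpr (by rw [← pow_two]; exact hsq)
  rw [← hS', CFC.sqrt_eq_cfc, cfc_nnreal_eq_real _ _, hpsd2.1.cfc_eq, IsHermitian.cfc,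
    Unitary.conjStarAlgAut_apply, my_trace_conj (Unitary.coe_star_mul_self _)]
  refine Finset.sum_congr rfl fun i _ => ?_
  simp [Real.coe_sqrt, Real.coe_toNNReal', Matrix.eigenvalues_conjTranspose_mul_self_nonneg]

theorem stmt_1 {n : ℕ} (H M : Matrix (Fin n) (Fin n) ℂ)
    (hH : H.IsHermitian) (hM : M.IsHermitian) :
    ((M - (2 • posProj hH - 1)).PosSemidef ∧ ((1 - 2 • negProj hH) - M).PosSemidef) ↔
      (opNorm M ≤ 1 ∧ (H * M).trace = (traceNorm H : ℂ)) := by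
  set lam : Fin n → ℝ := hH.eigenvalues with hlam
  set U : Matrix (Fin n) (Fin n) ℂ := (hH.eigenvectorUnitary : Matrix (Fin n) (Fin n) ℂ) with hU
  have h1 : star U * U = 1 := Unitary.coe_star_mul_self _
  have h2 : U * star U = 1 := Unitary.coe_mul_star_self _
  set N : Matrix (Fin n) (Fin n) ℂ := star U * M * U with hNdef
  have hN : N.IsHermitian := by
    rw [hNdef, Matrix.star_eq_conjTranspose]
    exact Matrix.isHermitian_conjTranspose_mul_mul U hM
  set dp : Fin n → ℂ := fun i => if 0 < lam i then (1:ℂ) else 0 with hdp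
  set dm : Fin n → ℂ := fun i => if lam i < 0 then (1:ℂ) else 0 with hdm
  -- transport the two PSD conditions
  have e1 : star U * (M - (2 • posProj hH - 1)) * U = N - (2 • diagonal dp - 1) := by
    rw [show posProj hH = U * diagonal dp * star U from rfl]
    rw [two_smul, two_smul]
    simp only [mul_sub, sub_mul, mul_add, add_mul, Matrix.mul_one]
    rw [my_key_conj h1 (diagonal dp), h1]
  have e2 : star U * ((1 - 2 • negProj hH) - M) * U = (1 - 2 • diagonal dm) - N := by
    rw [show negProj hH = U * diagonal dm * star U from rfl]
    rw [two_smul, two_smul]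
    simp only [mul_sub, sub_mul, mul_add, add_mul, Matrix.mul_one, Matrix.one_mul]
    rw [my_key_conj h1 (diagonal dm), h1]
  have t1 : (M - (2 • posProj hH - 1)).PosSemidef ↔ (N - (2 • diagonal dp - 1)).PosSemidef := by
    rw [← my_conj_psd_iff (A := M - (2 • posProj hH - 1)) h1 h2, e1]
  have t2 : ((1 - 2 • negProj hH) - M).PosSemidef ↔ ((1 - 2 • diagonal dm) - N).PosSemidef := by
    rw [← my_conj_psd_iff (A := (1 - 2 • negProj hH) - M) h1 h2, e2]
  -- transport the operator norm condition
  have e3 : star U * (1 - M) * U = 1 - N := by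
    rw [mul_sub, sub_mul, Matrix.mul_one, h1]
  have e4 : star U * (1 + M) * U = 1 + N := by
    rw [mul_add, add_mul, Matrix.mul_one, h1]
  have t3 : opNorm M ≤ 1 ↔ ((1 - N).PosSemidef ∧ (1 + N).PosSemidef) := by
    rw [my_opNorm_le_one_iff hM,
      ← my_conj_psd_iff (A := 1 - M) h1 h2, e3,
      ← my_conj_psd_iff (A := 1 + M) h1 h2, e4]
  -- transport the trace condition
  have htr : (H * M).trace = ∑ i, (lam i : ℂ) * N i i := by
    set D : Matrix (Fin n) (Fin n) ℂ := diagonal (RCLike.ofReal ∘ lam) with hD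
    calc (H * M).trace = ((U * D * star U) * M).trace := by
          conv_lhs => rw [hH.spectral_theorem, Unitary.conjStarAlgAut_apply]
      _ = ((U * D) * (star U * M)).trace := by rw [Matrix.mul_assoc]
      _ = ((star U * M) * (U * D)).trace := Matrix.trace_mul_comm _ _
      _ = ((star U * M * U) * D).trace := by simp only [Matrix.mul_assoc]
      _ = (D * N).trace := Matrix.trace_mul_comm _ _
      _ = ∑ i, (lam i : ℂ) * N i i := by
          rw [hD]
          simp [Matrix.trace, Matrix.diag, Matrix.diagonal_mul]
  have htn : (traceNorm H : ℂ) = ∑ i, ((|lam i| : ℝ) : ℂ) := by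
    have hpsd2 : (Hᴴ * H).PosSemidef := Matrix.posSemidef_conjTranspose_mul_self H
    have hS : (U * diagonal (fun i => ((|lam i| : ℝ) : ℂ)) * star U).PosSemidef := by
      rw [Matrix.star_eq_conjTranspose]
      refine (posSemidef_diagonal_iff.mpr fun i => ?_).mul_mul_conjTranspose_same U
      rw [Complex.zero_le_real]
      exact abs_nonneg _
    have hsq : (U * diagonal (fun i => ((|lam i| : ℝ) : ℂ)) * star U) ^ 2 = Hᴴ * H := by
      rw [pow_two, hH.eq]
      conv_rhs => rw [hH.spectral_theorem, Unitary.conjStarAlgAut_apply]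
      simp only [← Matrix.mul_assoc]
      rw [Matrix.mul_assoc (U * diagonal (fun i => ((|lam i| : ℝ) : ℂ))) (star U) U, h1,
        mul_one, Matrix.mul_assoc (U * diagonal (RCLike.ofReal ∘ lam)) (star U) U, h1, mul_one,
        Matrix.mul_assoc U _ (diagonal (fun i => ((|lam i| : ℝ) : ℂ))),
        Matrix.mul_assoc U _ (diagonal (RCLike.ofReal ∘ lam))]
      have hdd : diagonal (fun i => ((|lam i| : ℝ) : ℂ)) * diagonal (fun i => ((|lam i| : ℝ) : ℂ))
          = diagonal ((RCLike.ofReal ∘ lam) : Fin n → ℂ)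
            * diagonal ((RCLike.ofReal ∘ lam) : Fin n → ℂ) := by
        rw [diagonal_mul_diagonal, diagonal_mul_diagonal]
        refine congrArg diagonal (funext fun i => ?_)
        show ((|lam i| : ℝ) : ℂ) * ((|lam i| : ℝ) : ℂ)
            = (RCLike.ofReal (lam i) : ℂ) * RCLike.ofReal (lam i)
        rw [← RCLike.ofReal_mul, ← Complex.ofReal_mul, abs_mul_abs_self]; norm_cast
      rw [hdd]
    have htrS : (U * diagonal (fun i => ((|lam i| : ℝ) : ℂ)) * star U).trace
        = ∑ i, ((|lam i| : ℝ) : ℂ) := my_trace_conj h1 _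
    rw [show (traceNorm H : ℂ)
        = ∑ i, ((Real.sqrt ((Matrix.isHermitian_conjTranspose_mul_self H).eigenvalues i) : ℝ) : ℂ) by
      rw [traceNorm]; push_cast; rfl]
    rw [← my_sqrt_trace H _ hS hsq, htrS]
  have main := my_core lam hN
  constructor
  · rintro ⟨a, b⟩
    obtain ⟨⟨c1, c2⟩, c3⟩ := main.mp ⟨t1.mp a, t2.mp b⟩
    exact ⟨t3.mpr ⟨c1, c2⟩, by rw [htr, htn, c3]⟩
  · rintro ⟨a, b⟩
    obtain ⟨c1, c2⟩ := t3.mp a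
    have c3 : ∑ i, (lam i : ℂ) * N i i = ∑ i, ((|lam i| : ℝ) : ℂ) := by
      rw [← htr, ← htn, b]
    obtain ⟨d1, d2⟩ := main.mpr ⟨⟨c1, c2⟩, c3⟩
    exact ⟨t1.mpr d1, t2.mpr d2⟩
end

section
/- Let H, B be n×n Hermitian matrices with B positive semidefinite, and let P⁺ and P⁻ be the orthogonal projections onto the strictly positive and strictly negative eigenspaces of H. Then ‖H‖_tr ≤ ‖H + λB‖_tr for all real λ if and only if Tr(BP⁺) ≤ (1/2)Tr(B) and Tr(BP⁻) ≤ (1/2)Tr(B). -/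
open Matrix BigOperators

open scoped ComplexOrder

section BJHelpers0
open Matrix
open scoped MatrixOrder

variable {n : ℕ}

private lemma psd_exists_sqrt {A : Matrix (Fin n) (Fin n) ℂ} (hA : A.PosSemidef) :
    ∃ S : Matrix (Fin n) (Fin n) ℂ, S * S = A ∧ Sᴴ = S ∧ S.PosSemidef := by
  have h0 : (0 : Matrix (Fin n) (Fin n) ℂ) ≤ A := Matrix.nonneg_iff_posSemidef.mpr hA
  have hS : (CFC.sqrt A).PosSemidef := Matrix.nonneg_iff_posSemidef.mp (CFC.sqrt_nonneg A)
  exact ⟨CFC.sqrt A, CFC.sqrt_mul_sqrt_self A h0, hS.1.eq, hS⟩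

private lemma star_mul_self_mul_eq_diagonal_aux {M : Matrix (Fin n) (Fin n) ℂ}
    (hM : M.IsHermitian) :
    (star (hM.eigenvectorUnitary : Matrix (Fin n) (Fin n) ℂ)) * M *
      (hM.eigenvectorUnitary : Matrix (Fin n) (Fin n) ℂ) =
      Matrix.diagonal (RCLike.ofReal ∘ hM.eigenvalues) := by
  have h := hM.conjStarAlgAut_star_eigenvectorUnitary
  rw [Unitary.conjStarAlgAut_star_apply] at h
  exact h

end BJHelpers0

section BJHelpers
open Matrix
open scoped ComplexOrder

variable {n : ℕ}

private lemma trace_conj_unitary (U : Matrix.unitaryGroup (Fin n) ℂ) (M : Matrix (Fin n) (Fin n) ℂ) :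
    ((U : Matrix (Fin n) (Fin n) ℂ) * M * star (U : Matrix (Fin n) (Fin n) ℂ)).trace = M.trace := by
  rw [Matrix.trace_mul_cycle, Unitary.coe_star_mul_self, Matrix.one_mul]

private lemma conj_mul_conj (U : Matrix.unitaryGroup (Fin n) ℂ) (A B : Matrix (Fin n) (Fin n) ℂ) :
    ((U : Matrix (Fin n) (Fin n) ℂ) * A * star (U : Matrix (Fin n) (Fin n) ℂ)) *
      ((U : Matrix (Fin n) (Fin n) ℂ) * B * star (U : Matrix (Fin n) (Fin n) ℂ)) =
    (U : Matrix (Fin n) (Fin n) ℂ) * (A * B) * star (U : Matrix (Fin n) (Fin n) ℂ) := by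
  have h : (star (U : Matrix (Fin n) (Fin n) ℂ)) * (U : Matrix (Fin n) (Fin n) ℂ) = 1 :=
    Unitary.coe_star_mul_self U
  calc ((U : Matrix (Fin n) (Fin n) ℂ) * A * star (U : Matrix (Fin n) (Fin n) ℂ)) *
      ((U : Matrix (Fin n) (Fin n) ℂ) * B * star (U : Matrix (Fin n) (Fin n) ℂ))
      = (U : Matrix (Fin n) (Fin n) ℂ) * (A * ((star (U : Matrix (Fin n) (Fin n) ℂ)) * (U : Matrix (Fin n) (Fin n) ℂ)) * B) * star (U : Matrix (Fin n) (Fin n) ℂ) := by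
        simp only [Matrix.mul_assoc]
    _ = _ := by rw [h]; simp [Matrix.mul_assoc]

private lemma conj_conj (U : Matrix.unitaryGroup (Fin n) ℂ) (Q : Matrix (Fin n) (Fin n) ℂ) :
    (U : Matrix (Fin n) (Fin n) ℂ) * ((star (U : Matrix (Fin n) (Fin n) ℂ)) * Q *
      (U : Matrix (Fin n) (Fin n) ℂ)) * star (U : Matrix (Fin n) (Fin n) ℂ) = Q := by
  have h : (U : Matrix (Fin n) (Fin n) ℂ) * (star (U : Matrix (Fin n) (Fin n) ℂ)) = 1 :=
    Unitary.coe_mul_star_self U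
  calc (U : Matrix (Fin n) (Fin n) ℂ) * ((star (U : Matrix (Fin n) (Fin n) ℂ)) * Q *
      (U : Matrix (Fin n) (Fin n) ℂ)) * star (U : Matrix (Fin n) (Fin n) ℂ)
      = ((U : Matrix (Fin n) (Fin n) ℂ) * (star (U : Matrix (Fin n) (Fin n) ℂ))) * Q *
        ((U : Matrix (Fin n) (Fin n) ℂ) * (star (U : Matrix (Fin n) (Fin n) ℂ))) := by
        simp only [Matrix.mul_assoc]
    _ = Q := by rw [h]; simp

private lemma psd_conj_diag (U : Matrix.unitaryGroup (Fin n) ℂ) (c : Fin n → ℝ) (hc : ∀ i, 0 ≤ c i) :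
    ((U : Matrix (Fin n) (Fin n) ℂ) * Matrix.diagonal (fun i => (Complex.ofReal (c i))) *
      star (U : Matrix (Fin n) (Fin n) ℂ)).PosSemidef := by
  rw [Matrix.star_eq_conjTranspose]
  apply Matrix.PosSemidef.mul_mul_conjTranspose_same
  refine Matrix.posSemidef_diagonal_iff.mpr fun i => ?_
  exact_mod_cast Complex.zero_le_real.mpr (hc i)

private lemma psd_conj_unitary {P : Matrix (Fin n) (Fin n) ℂ} (hP : P.PosSemidef)
    (U : Matrix.unitaryGroup (Fin n) ℂ) :
    ((star (U : Matrix (Fin n) (Fin n) ℂ)) * P * (U : Matrix (Fin n) (Fin n) ℂ)).PosSemidef := by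
  rw [Matrix.star_eq_conjTranspose]
  exact hP.conjTranspose_mul_mul_same _

private lemma conj_unitary_sub_one {X : Matrix (Fin n) (Fin n) ℂ}
    (U : Matrix.unitaryGroup (Fin n) ℂ) :
    (star (U : Matrix (Fin n) (Fin n) ℂ)) * (1 - X) * (U : Matrix (Fin n) (Fin n) ℂ) =
      1 - (star (U : Matrix (Fin n) (Fin n) ℂ)) * X * (U : Matrix (Fin n) (Fin n) ℂ) := by
  rw [Matrix.mul_sub, Matrix.mul_one, Matrix.sub_mul, Matrix.mem_unitaryGroup_iff'.mp U.2]

open scoped MatrixOrder in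
private lemma traceNorm_hermitian {M : Matrix (Fin n) (Fin n) ℂ} (hM : M.IsHermitian) :
    traceNorm M = ∑ i, |hM.eigenvalues i| := by
  set U := hM.eigenvectorUnitary with hU
  set d := hM.eigenvalues with hd
  set S : Matrix (Fin n) (Fin n) ℂ :=
    (U : Matrix (Fin n) (Fin n) ℂ) * Matrix.diagonal (fun i => (Complex.ofReal |d i|)) *
      star (U : Matrix (Fin n) (Fin n) ℂ) with hS
  have hSpsd : S.PosSemidef := psd_conj_diag U _ (fun i => abs_nonneg _)
  have hApsd : (Mᴴ * M).PosSemidef := Matrix.posSemidef_conjTranspose_mul_self M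
  have hsq : S ^ 2 = Mᴴ * M := by
    rw [pow_two, hS, conj_mul_conj, Matrix.diagonal_mul_diagonal, hM.eq]
    conv_rhs => rw [hM.spectral_theorem, Unitary.conjStarAlgAut_apply]
    rw [conj_mul_conj, Matrix.diagonal_mul_diagonal]
    congr 1
    · congr 1
      funext i
      simp only [Function.comp_apply, ← Complex.ofReal_mul, abs_mul_abs_self]
      simp [Matrix.diagonal_apply, Complex.ofReal_mul]
      rfl
  have hSeq : S = CFC.sqrt (Mᴴ * M) :=
    (CFC.sqrt_unique (a := Mᴴ * M) (b := S) (by rw [← pow_two]; exact hsq) (Matrix.nonneg_iff_posSemidef.mpr hSpsd)).symm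
  have h1 : S.trace = ∑ i, (Complex.ofReal |d i|) := by
    rw [hS, trace_conj_unitary, Matrix.trace_diagonal]
  have h2 : (CFC.sqrt (Mᴴ * M)).trace =
      ∑ i, (Real.sqrt ((Matrix.isHermitian_conjTranspose_mul_self M).eigenvalues i) : ℂ) := by
    have : CFC.sqrt (Mᴴ * M) = (hApsd.1.eigenvectorUnitary : Matrix (Fin n) (Fin n) ℂ) *
        Matrix.diagonal ((↑) ∘ Real.sqrt ∘ hApsd.1.eigenvalues) *
        star (hApsd.1.eigenvectorUnitary : Matrix (Fin n) (Fin n) ℂ) := by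
      rw [CFC.sqrt_eq_real_sqrt _ (Matrix.nonneg_iff_posSemidef.mpr hApsd), cfcₙ_eq_cfc,
        hApsd.1.cfc_eq]
      rfl
    rw [this, trace_conj_unitary, Matrix.trace_diagonal]
    rfl
  have h3 := h1.symm.trans (by rw [hSeq, h2])
  have h4 := congrArg Complex.re h3
  simpa [traceNorm, Complex.ofReal_sum] using h4.symm

private lemma psd_diag_nonneg {P : Matrix (Fin n) (Fin n) ℂ} (hP : P.PosSemidef) (i : Fin n) :
    0 ≤ P i i := by
  exact hP.diag_nonneg

private lemma psd_diag_re_nonneg {P : Matrix (Fin n) (Fin n) ℂ} (hP : P.PosSemidef) (i : Fin n) :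
    0 ≤ (P i i).re :=
  (Complex.le_def.mp (psd_diag_nonneg hP i)).1

private lemma psd_diag_eq_re {P : Matrix (Fin n) (Fin n) ℂ} (hP : P.PosSemidef) (i : Fin n) :
    P i i = ((P i i).re : ℂ) := by
  have h := (Complex.le_def.mp (psd_diag_nonneg hP i)).2
  exact Complex.ext rfl (by simpa using h.symm)

private lemma psd_entry_sq_le {P : Matrix (Fin n) (Fin n) ℂ} (hP : P.PosSemidef) (i j : Fin n) :
    ‖P i j‖ ^ 2 ≤ (P i i).re * (P j j).re := by
  obtain ⟨A, rfl⟩ : ∃ A : Matrix (Fin n) (Fin n) ℂ, P = Aᴴ * A := by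
    obtain ⟨S, hSS, hSH, -⟩ := psd_exists_sqrt hP
    exact ⟨S, by rw [hSH, hSS]⟩
  have hij : (Aᴴ * A) i j = ∑ k, (starRingEnd ℂ) (A k i) * A k j := by
    simp [Matrix.mul_apply, Matrix.conjTranspose_apply]
  have key : ∀ l : Fin n, ((Aᴴ * A) l l).re = ∑ k, ‖A k l‖ ^ 2 := by
    intro l
    rw [Matrix.mul_apply, Complex.re_sum]
    refine Finset.sum_congr rfl fun k _ => ?_
    rw [Matrix.conjTranspose_apply, ← Complex.normSq_eq_norm_sq]
    simp [Complex.normSq_apply, Complex.mul_re, mul_comm]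
  rw [hij, key i, key j]
  calc ‖∑ k, (starRingEnd ℂ) (A k i) * A k j‖ ^ 2
      ≤ (∑ k, ‖A k i‖ * ‖A k j‖) ^ 2 := by
        apply pow_le_pow_left₀ (norm_nonneg _)
        refine (norm_sum_le _ _).trans ?_
        apply Finset.sum_le_sum
        intro k _
        rw [norm_mul, Complex.norm_conj]
    _ ≤ (∑ k, ‖A k i‖ ^ 2) * ∑ k, ‖A k j‖ ^ 2 :=
        Finset.sum_mul_sq_le_sq_mul_sq _ _ _

private lemma trace_mul_conj_diag (U : Matrix.unitaryGroup (Fin n) ℂ) (M : Matrix (Fin n) (Fin n) ℂ)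
    (c : Fin n → ℂ) :
    (M * ((U : Matrix (Fin n) (Fin n) ℂ) * Matrix.diagonal c *
      star (U : Matrix (Fin n) (Fin n) ℂ))).trace =
    ∑ i, ((star (U : Matrix (Fin n) (Fin n) ℂ)) * M * (U : Matrix (Fin n) (Fin n) ℂ)) i i * c i := by
  have h : M * ((U : Matrix (Fin n) (Fin n) ℂ) * Matrix.diagonal c *
      star (U : Matrix (Fin n) (Fin n) ℂ)) =
      (U : Matrix (Fin n) (Fin n) ℂ) * (((star (U : Matrix (Fin n) (Fin n) ℂ)) * M *
        (U : Matrix (Fin n) (Fin n) ℂ)) * Matrix.diagonal c) * star (U : Matrix (Fin n) (Fin n) ℂ) := by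
    simp only [← Matrix.mul_assoc]
    rw [Matrix.mem_unitaryGroup_iff.mp U.2, Matrix.one_mul]
  rw [h, trace_conj_unitary]
  simp [Matrix.trace, Matrix.diag_apply, Matrix.mul_diagonal]

private lemma psd_trace_re_nonneg {P : Matrix (Fin n) (Fin n) ℂ} (hP : P.PosSemidef) :
    0 ≤ (P.trace).re := by
  rw [Matrix.trace, Complex.re_sum]
  simp only [Matrix.diag_apply]
  exact Finset.sum_nonneg fun i _ => psd_diag_re_nonneg hP i

private lemma psd_trace_mul_re_nonneg {A B : Matrix (Fin n) (Fin n) ℂ} (hA : A.PosSemidef)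
    (hB : B.PosSemidef) : 0 ≤ ((A * B).trace).re := by
  obtain ⟨S, hSS, hSH, -⟩ := psd_exists_sqrt hA
  have h1 : A * B = S * (S * B) := by
    rw [← Matrix.mul_assoc, hSS]
  have h2 : (A * B).trace = (S * B * S).trace := by
    rw [h1, Matrix.trace_mul_comm, Matrix.mul_assoc]
  have h3 : (S * B * S).PosSemidef := by
    have := hB.conjTranspose_mul_mul_same S
    rwa [hSH] at this
  rw [h2]
  exact psd_trace_re_nonneg h3

private lemma abs_re_trace_mul_le (E B : Matrix (Fin n) (Fin n) ℂ) (c : ℝ) (hc : 0 ≤ c)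
    (hE : ∀ i j, ‖E i j‖ ≤ c) :
    |((E * B).trace).re| ≤ c * ∑ i, ∑ j, ‖B i j‖ := by
  have h1 : ((E * B).trace) = ∑ i, ∑ j, E i j * B j i := by
    simp [Matrix.trace, Matrix.diag_apply, Matrix.mul_apply]
  rw [h1]
  calc |(∑ i, ∑ j, E i j * B j i).re|
      ≤ ‖∑ i, ∑ j, E i j * B j i‖ := Complex.abs_re_le_norm _
    _ ≤ ∑ i, ∑ j, ‖E i j * B j i‖ := by
        refine (norm_sum_le _ _).trans (Finset.sum_le_sum fun i _ => norm_sum_le _ _)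
    _ ≤ ∑ i, ∑ j, c * ‖B j i‖ := by
        refine Finset.sum_le_sum fun i _ => Finset.sum_le_sum fun j _ => ?_
        rw [norm_mul]
        exact mul_le_mul_of_nonneg_right (hE i j) (norm_nonneg _)
    _ = c * ∑ i, ∑ j, ‖B i j‖ := by
        rw [Finset.mul_sum]
        rw [Finset.sum_comm]
        exact Finset.sum_congr rfl fun i _ => by rw [Finset.mul_sum]

end BJHelpers

section BJHelpers2
open Matrix
open scoped ComplexOrder

variable {n : ℕ}

/-- dual lower bound: if `1 ± X` are PSD then `Re tr (X M) ≤ ‖M‖₁` for Hermitian `M`. -/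
private lemma re_trace_mul_le_traceNorm {M X : Matrix (Fin n) (Fin n) ℂ} (hM : M.IsHermitian)
    (h1 : (1 - X).PosSemidef) (h2 : (1 + X).PosSemidef) :
    ((X * M).trace).re ≤ traceNorm M := by
  set U := hM.eigenvectorUnitary with hUdef
  set Y := (star (U : Matrix (Fin n) (Fin n) ℂ)) * X * (U : Matrix (Fin n) (Fin n) ℂ) with hY
  have hXM : (X * M).trace = ∑ i, Y i i * (RCLike.ofReal ∘ hM.eigenvalues) i := by
    conv_lhs => rw [hM.spectral_theorem]
    exact trace_mul_conj_diag _ _ _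
  have h1' : (1 - Y).PosSemidef := by
    have := psd_conj_unitary h1 U
    rwa [conj_unitary_sub_one] at this
  have h2' : (1 + Y).PosSemidef := by
    have := psd_conj_unitary h2 U
    have e : (star (U : Matrix (Fin n) (Fin n) ℂ)) * (1 + X) * (U : Matrix (Fin n) (Fin n) ℂ) =
        1 + Y := by
      rw [Matrix.mul_add, Matrix.mul_one, Matrix.add_mul, Matrix.mem_unitaryGroup_iff'.mp U.2, hY]
    rwa [e] at this
  have hbound : ∀ i, |(Y i i).re| ≤ 1 := by
    intro i
    have hu : (Y i i).re ≤ 1 := by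
      have := psd_diag_re_nonneg h1' i
      rw [Matrix.sub_apply, Matrix.one_apply_eq, Complex.sub_re, Complex.one_re] at this
      linarith
    have hl : -1 ≤ (Y i i).re := by
      have := psd_diag_re_nonneg h2' i
      rw [Matrix.add_apply, Matrix.one_apply_eq, Complex.add_re, Complex.one_re] at this
      linarith
    exact abs_le.mpr ⟨hl, hu⟩
  rw [traceNorm_hermitian hM, hXM, Complex.re_sum]
  refine Finset.sum_le_sum fun i _ => ?_
  have : (Y i i * (RCLike.ofReal ∘ hM.eigenvalues) i).re = (Y i i).re * hM.eigenvalues i := by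
    simp [Function.comp, Complex.mul_re]
  rw [this]
  calc (Y i i).re * hM.eigenvalues i ≤ |(Y i i).re * hM.eigenvalues i| := le_abs_self _
    _ = |(Y i i).re| * |hM.eigenvalues i| := abs_mul _ _
    _ ≤ 1 * |hM.eigenvalues i| := by
        exact mul_le_mul_of_nonneg_right (hbound i) (abs_nonneg _)
    _ = |hM.eigenvalues i| := one_mul _

private lemma trace_hermitian_re {M : Matrix (Fin n) (Fin n) ℂ} (hM : M.IsHermitian) :
    (M.trace).re = ∑ i, hM.eigenvalues i := by
  conv_lhs => rw [hM.spectral_theorem, Unitary.conjStarAlgAut_apply]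
  rw [trace_conj_unitary, Matrix.trace_diagonal, Complex.re_sum]
  exact Finset.sum_congr rfl fun i _ => by simp [Function.comp]

private lemma trace_posProj_mul_re {M : Matrix (Fin n) (Fin n) ℂ} (hM : M.IsHermitian) :
    ((posProj hM * M).trace).re = ∑ i, (if 0 < hM.eigenvalues i then hM.eigenvalues i else 0) := by
  have h : (posProj hM * M).trace = (M * posProj hM).trace := Matrix.trace_mul_comm _ _
  rw [h]
  unfold posProj
  rw [trace_mul_conj_diag, star_mul_self_mul_eq_diagonal_aux hM]
  rw [Complex.re_sum]
  refine Finset.sum_congr rfl fun i _ => ?_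
  rw [Matrix.diagonal_apply_eq]
  by_cases hd : 0 < hM.eigenvalues i <;> simp [hd, Function.comp]

/-- trace-norm via positive part. -/
private lemma traceNorm_eq_posPart {M : Matrix (Fin n) (Fin n) ℂ} (hM : M.IsHermitian) :
    traceNorm M = 2 * ((posProj hM * M).trace).re - (M.trace).re := by
  rw [traceNorm_hermitian hM, trace_posProj_mul_re hM, trace_hermitian_re hM,
    Finset.mul_sum, ← Finset.sum_sub_distrib]
  refine Finset.sum_congr rfl fun i _ => ?_
  by_cases hd : 0 < hM.eigenvalues i
  · rw [if_pos hd, abs_of_pos hd]; ring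
  · rw [if_neg hd, abs_of_nonpos (le_of_not_gt hd)]; ring

end BJHelpers2

section BJHelpers3
open Matrix
open scoped ComplexOrder

variable {n : ℕ}

private lemma trace_conj_unitary' (U : Matrix.unitaryGroup (Fin n) ℂ)
    (M : Matrix (Fin n) (Fin n) ℂ) :
    ((star (U : Matrix (Fin n) (Fin n) ℂ)) * M * (U : Matrix (Fin n) (Fin n) ℂ)).trace = M.trace := by
  rw [Matrix.trace_mul_cycle]
  rw [Matrix.mem_unitaryGroup_iff.mp U.2, Matrix.one_mul]

private lemma one_sub_conj_diag (V : Matrix.unitaryGroup (Fin n) ℂ) (c : Fin n → ℂ) :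
    1 - (V : Matrix (Fin n) (Fin n) ℂ) * Matrix.diagonal c * star (V : Matrix (Fin n) (Fin n) ℂ) =
    (V : Matrix (Fin n) (Fin n) ℂ) * Matrix.diagonal (fun i => 1 - c i) *
      star (V : Matrix (Fin n) (Fin n) ℂ) := by
  have h : Matrix.diagonal (fun i => (1:ℂ) - c i) = 1 - Matrix.diagonal c := by
    rw [← Matrix.diagonal_one, ← Matrix.diagonal_sub]
  rw [h, Matrix.mul_sub, Matrix.mul_one, Matrix.sub_mul, Matrix.mem_unitaryGroup_iff.mp V.2]

private lemma one_add_conj_diag (V : Matrix.unitaryGroup (Fin n) ℂ) (c : Fin n → ℂ) :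
    1 + (V : Matrix (Fin n) (Fin n) ℂ) * Matrix.diagonal c * star (V : Matrix (Fin n) (Fin n) ℂ) =
    (V : Matrix (Fin n) (Fin n) ℂ) * Matrix.diagonal (fun i => 1 + c i) *
      star (V : Matrix (Fin n) (Fin n) ℂ) := by
  have h : Matrix.diagonal (fun i => (1:ℂ) + c i) = 1 + Matrix.diagonal c := by
    rw [← Matrix.diagonal_one, ← Matrix.diagonal_add]
  rw [h, Matrix.mul_add, Matrix.mul_one, Matrix.add_mul, Matrix.mem_unitaryGroup_iff.mp V.2]

private lemma trace_diagProj_mul_re (p : Fin n → Prop) [DecidablePred p]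
    (A : Matrix (Fin n) (Fin n) ℂ) :
    ((Matrix.diagonal (fun i => if p i then (1:ℂ) else 0) * A).trace).re
      = ∑ i, if p i then (A i i).re else 0 := by
  rw [Matrix.trace, Complex.re_sum]
  refine Finset.sum_congr rfl fun i _ => ?_
  rw [Matrix.diag_apply, Matrix.diagonal_mul]
  split <;> simp

private lemma smul_hermitian {B : Matrix (Fin n) (Fin n) ℂ} (hB : B.IsHermitian) (l : ℝ) :
    ((l:ℂ) • B).IsHermitian := by
  unfold Matrix.IsHermitian
  rw [Matrix.conjTranspose_smul, hB.eq, Complex.star_def, Complex.conj_ofReal]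

set_option maxHeartbeats 1000000 in
private lemma core_bound {H B : Matrix (Fin n) (Fin n) ℂ} (hH : H.IsHermitian)
    (hB : B.PosSemidef) (δ : ℝ)
    (hδ : ∀ i, hH.eigenvalues i ≠ 0 → δ ≤ |hH.eigenvalues i|) (l : ℝ) :
    ∃ t c0 e : ℝ, 0 ≤ t ∧ 0 ≤ c0 ∧
      c0 ≤ (∑ i, if hH.eigenvalues i = 0 then
        (((star (hH.eigenvectorUnitary : Matrix (Fin n) (Fin n) ℂ)) * B *
          (hH.eigenvectorUnitary : Matrix (Fin n) (Fin n) ℂ)) i i).re else 0) ∧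
      |e| ≤ (∑ i, ∑ j, ‖((star (hH.eigenvectorUnitary : Matrix (Fin n) (Fin n) ℂ)) * B *
          (hH.eigenvectorUnitary : Matrix (Fin n) (Fin n) ℂ)) i j‖) * Real.sqrt t ∧
      traceNorm (H + (l:ℂ) • B) ≤ traceNorm H - 2*δ*t +
        l * (2*((∑ i, if 0 < hH.eigenvalues i then
          (((star (hH.eigenvectorUnitary : Matrix (Fin n) (Fin n) ℂ)) * B *
            (hH.eigenvectorUnitary : Matrix (Fin n) (Fin n) ℂ)) i i).re else 0) + c0 + e) -
          (∑ i, (((star (hH.eigenvectorUnitary : Matrix (Fin n) (Fin n) ℂ)) * B *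
            (hH.eigenvectorUnitary : Matrix (Fin n) (Fin n) ℂ)) i i).re)) := by
  classical
  set U := hH.eigenvectorUnitary with hUdef
  set d := hH.eigenvalues with hddef
  set B' := (star (U : Matrix (Fin n) (Fin n) ℂ)) * B * (U : Matrix (Fin n) (Fin n) ℂ) with hB'def
  have hB'psd : B'.PosSemidef := psd_conj_unitary hB U
  have hMl : (H + (l:ℂ) • B).IsHermitian := hH.add (smul_hermitian hB.1 l)
  set V := hMl.eigenvectorUnitary with hVdef
  set Q := posProj hMl with hQdef
  have hQform : Q = (V : Matrix (Fin n) (Fin n) ℂ) *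
      Matrix.diagonal (fun i => if 0 < hMl.eigenvalues i then (1:ℂ) else 0) *
      star (V : Matrix (Fin n) (Fin n) ℂ) := rfl
  have hQpsd : Q.PosSemidef := by
    rw [hQform]
    have h : (fun i => if 0 < hMl.eigenvalues i then (1:ℂ) else 0)
        = fun i => Complex.ofReal (if 0 < hMl.eigenvalues i then (1:ℝ) else 0) := by
      funext i; split <;> simp
    rw [h]
    exact psd_conj_diag V _ (fun i => by split <;> norm_num)
  have hQ1 : (1 - Q).PosSemidef := by
    rw [hQform, one_sub_conj_diag]
    have h : (fun i => 1 - (if 0 < hMl.eigenvalues i then (1:ℂ) else 0))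
        = fun i => Complex.ofReal (if 0 < hMl.eigenvalues i then (0:ℝ) else 1) := by
      funext i; split <;> simp
    rw [h]
    exact psd_conj_diag V _ (fun i => by split <;> norm_num)
  set Q' := (star (U : Matrix (Fin n) (Fin n) ℂ)) * Q * (U : Matrix (Fin n) (Fin n) ℂ) with hQ'def
  have hQ'psd : Q'.PosSemidef := psd_conj_unitary hQpsd U
  have hQ'1 : (1 - Q').PosSemidef := by
    have := psd_conj_unitary hQ1 U
    rwa [conj_unitary_sub_one] at this
  set q : Fin n → ℝ := fun i => (Q' i i).re with hqdef
  have hq0 : ∀ i, 0 ≤ q i := fun i => psd_diag_re_nonneg hQ'psd i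
  have hq1 : ∀ i, q i ≤ 1 := by
    intro i
    have h := psd_diag_re_nonneg hQ'1 i
    rw [Matrix.sub_apply, Matrix.one_apply_eq, Complex.sub_re, Complex.one_re] at h
    linarith
  set w : Fin n → ℝ := fun i => if 0 < d i then 1 - q i else if d i < 0 then q i else 0 with hwdef
  have hw0 : ∀ i, 0 ≤ w i := by
    intro i
    rw [hwdef]
    dsimp only
    split
    · linarith [hq1 i]
    · split
      · exact hq0 i
      · exact le_refl 0
  set t := ∑ i, w i with htdef
  have ht0 : 0 ≤ t := Finset.sum_nonneg fun i _ => hw0 i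
  have hwt : ∀ i, w i ≤ t := fun i => Finset.single_le_sum (fun j _ => hw0 j) (Finset.mem_univ i)
  -- trace identities
  have hQH : ((Q * H).trace).re = ∑ i, q i * d i := by
    have h : (Q * H).trace = ∑ i, Q' i i * (RCLike.ofReal ∘ d) i := by
      conv_lhs => rw [hH.spectral_theorem]
      exact trace_mul_conj_diag U Q _
    rw [h, Complex.re_sum]
    refine Finset.sum_congr rfl fun i _ => ?_
    simp [Function.comp, Complex.mul_re, hqdef]
  have hQB : ((Q * B).trace) = ((Q' * B').trace) := by
    have hQc : (U : Matrix (Fin n) (Fin n) ℂ) * Q' * star (U : Matrix (Fin n) (Fin n) ℂ) = Q :=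
      conj_conj U Q
    have hBc : (U : Matrix (Fin n) (Fin n) ℂ) * B' * star (U : Matrix (Fin n) (Fin n) ℂ) = B :=
      conj_conj U B
    calc (Q * B).trace
        = (((U : Matrix (Fin n) (Fin n) ℂ) * Q' * star (U : Matrix (Fin n) (Fin n) ℂ)) *
          ((U : Matrix (Fin n) (Fin n) ℂ) * B' * star (U : Matrix (Fin n) (Fin n) ℂ))).trace := by
          rw [hQc, hBc]
      _ = ((U : Matrix (Fin n) (Fin n) ℂ) * (Q' * B') * star (U : Matrix (Fin n) (Fin n) ℂ)).trace := by
          rw [conj_mul_conj]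
      _ = (Q' * B').trace := trace_conj_unitary U _
  set P0 : Matrix (Fin n) (Fin n) ℂ := Matrix.diagonal (fun i => if d i = 0 then (1:ℂ) else 0)
    with hP0def
  set Pp : Matrix (Fin n) (Fin n) ℂ := Matrix.diagonal (fun i => if 0 < d i then (1:ℂ) else 0)
    with hPpdef
  have hP0H : P0ᴴ = P0 := by
    rw [hP0def, Matrix.diagonal_conjTranspose]
    have h : (star fun i => if d i = 0 then (1:ℂ) else 0)
        = fun i => if d i = 0 then (1:ℂ) else 0 := by
      funext i
      simp [Pi.star_apply, apply_ite (star : ℂ → ℂ)]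
    rw [h]
  set Q2 := P0 * Q' * P0 with hQ2def
  set EE := Q' - Pp - Q2 with hEEdef
  have hwval_pos : ∀ i, 0 < d i → w i = 1 - q i := by
    intro i hpos; rw [hwdef]; dsimp only; rw [if_pos hpos]
  have hwval_neg : ∀ i, d i < 0 → w i = q i := by
    intro i hneg; rw [hwdef]; dsimp only; rw [if_neg (not_lt.mpr hneg.le), if_pos hneg]
  refine ⟨t, ((Q2 * B').trace).re, ((EE * B').trace).re, ht0, ?_, ?_, ?_, ?_⟩
  · -- 0 ≤ c0
    have hQ2psd : Q2.PosSemidef := by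
      have h := hQ'psd.conjTranspose_mul_mul_same P0
      rwa [hP0H] at h
    exact psd_trace_mul_re_nonneg hQ2psd hB'psd
  · -- c0 ≤ b0
    have hsub : (P0 - Q2).PosSemidef := by
      have h2 : P0ᴴ * (1 - Q') * P0 = P0 - Q2 := by
        rw [hP0H, Matrix.mul_sub, Matrix.mul_one, Matrix.sub_mul, hQ2def]
        congr 1
        rw [hP0def, Matrix.diagonal_mul_diagonal]
        have h : (fun i => (if d i = 0 then (1:ℂ) else 0) * (if d i = 0 then (1:ℂ) else 0))
            = fun i => if d i = 0 then (1:ℂ) else 0 := by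
          funext i
          split <;> simp
        rw [h]
      have h := (hQ'1).conjTranspose_mul_mul_same P0
      rwa [h2] at h
    have h3 := psd_trace_mul_re_nonneg hsub hB'psd
    have h4 : ((P0 - Q2) * B').trace = (P0 * B').trace - (Q2 * B').trace := by
      rw [Matrix.sub_mul, Matrix.trace_sub]
    have h5 : ((P0 * B').trace).re = ∑ i, if d i = 0 then (B' i i).re else 0 := by
      rw [hP0def]
      exact trace_diagProj_mul_re _ B'
    rw [h4, Complex.sub_re, h5] at h3
    linarith
  · -- entrywise bound on EE and hence on e
    have hoff : ∀ i j : Fin n, i ≠ j → ‖Q' i j‖ ^ 2 ≤ (1 - q i) * (1 - q j) := by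
      intro i j hij
      have h := psd_entry_sq_le hQ'1 i j
      have e1 : (1 - Q') i j = - Q' i j := by
        simp [Matrix.sub_apply, Matrix.one_apply_ne hij]
      have e2 : ((1 - Q') i i).re = 1 - q i := by
        rw [Matrix.sub_apply, Matrix.one_apply_eq, Complex.sub_re, Complex.one_re]
      have e3 : ((1 - Q') j j).re = 1 - q j := by
        rw [Matrix.sub_apply, Matrix.one_apply_eq, Complex.sub_re, Complex.one_re]
      rw [e1, e2, e3] at h
      simpa using h
    have habsQ : ∀ i j, ‖Q' i j‖ ^ 2 ≤ q i * q j := fun i j =>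
      psd_entry_sq_le hQ'psd i j
    have hsqle : ∀ (z : ℂ) (a : ℝ), ‖z‖ ^ 2 ≤ a → a ≤ t →
        ‖z‖ ≤ Real.sqrt t := by
      intro z a h1 h2
      exact (Real.le_sqrt (norm_nonneg z) ht0).mpr (h1.trans h2)
    have hEapp : ∀ i j, EE i j = Q' i j - Pp i j -
        (if d i = 0 then (1:ℂ) else 0) * Q' i j * (if d j = 0 then (1:ℂ) else 0) := by
      intro i j
      have h : Q2 i j = (if d i = 0 then (1:ℂ) else 0) * Q' i j * (if d j = 0 then (1:ℂ) else 0) := by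
        rw [hQ2def, hP0def, Matrix.mul_diagonal, Matrix.diagonal_mul]
      rw [hEEdef, Matrix.sub_apply, Matrix.sub_apply, h]
    have hPpoff : ∀ i j : Fin n, i ≠ j → Pp i j = 0 := by
      intro i j hij
      rw [hPpdef, Matrix.diagonal_apply, if_neg hij]
    have hEbound : ∀ i j, ‖EE i j‖ ≤ Real.sqrt t := by
      intro i j
      by_cases h0i : d i = 0
      · by_cases h0j : d j = 0
        · have hz : EE i j = 0 := by
            rw [hEapp i j, if_pos h0i, if_pos h0j]
            have hp : Pp i j = 0 := by
              by_cases hij : i = j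
              · subst hij
                rw [hPpdef, Matrix.diagonal_apply_eq, if_neg (by rw [h0i]; exact lt_irrefl 0)]
              · exact hPpoff i j hij
            rw [hp]; ring
          rw [hz]
          simpa using Real.sqrt_nonneg t
        · have hij : i ≠ j := fun h => h0j (h ▸ h0i)
          have hz : EE i j = Q' i j := by
            rw [hEapp i j, if_neg h0j, hPpoff i j hij]; ring
          rw [hz]
          rcases lt_or_gt_of_ne h0j with hneg | hpos
          · refine hsqle _ (q j) ?_ ((hwval_neg j hneg) ▸ hwt j)
            calc ‖Q' i j‖ ^ 2 ≤ q i * q j := habsQ i j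
              _ ≤ 1 * q j := mul_le_mul_of_nonneg_right (hq1 i) (hq0 j)
              _ = q j := one_mul _
          · refine hsqle _ (1 - q j) ?_ ((hwval_pos j hpos) ▸ hwt j)
            calc ‖Q' i j‖ ^ 2 ≤ (1 - q i) * (1 - q j) := hoff i j hij
              _ ≤ 1 * (1 - q j) := mul_le_mul_of_nonneg_right (by linarith [hq0 i]) (by linarith [hq1 j])
              _ = 1 - q j := one_mul _
      · have hQ2z : ∀ j', EE i j' = Q' i j' - Pp i j' := by
          intro j'
          rw [hEapp i j', if_neg h0i]; ring
        by_cases h0j : d j = 0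
        · have hij : i ≠ j := fun h => h0i (h ▸ h0j)
          have hz : EE i j = Q' i j := by rw [hQ2z j, hPpoff i j hij, sub_zero]
          rw [hz]
          rcases lt_or_gt_of_ne h0i with hneg | hpos
          · refine hsqle _ (q i) ?_ ((hwval_neg i hneg) ▸ hwt i)
            calc ‖Q' i j‖ ^ 2 ≤ q i * q j := habsQ i j
              _ ≤ q i * 1 := mul_le_mul_of_nonneg_left (hq1 j) (hq0 i)
              _ = q i := mul_one _
          · refine hsqle _ (1 - q i) ?_ ((hwval_pos i hpos) ▸ hwt i)
            calc ‖Q' i j‖ ^ 2 ≤ (1 - q i) * (1 - q j) := hoff i j hij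
              _ ≤ (1 - q i) * 1 := mul_le_mul_of_nonneg_left (by linarith [hq0 j]) (by linarith [hq1 i])
              _ = 1 - q i := mul_one _
        · by_cases hij : i = j
          · subst hij
            have hqi : Q' i i = ((q i : ℝ) : ℂ) := psd_diag_eq_re hQ'psd i
            rcases lt_or_gt_of_ne h0i with hneg | hpos
            · have hz : EE i i = Q' i i := by
                rw [hQ2z i, hPpdef, Matrix.diagonal_apply_eq,
                  if_neg (not_lt.mpr hneg.le), sub_zero]
              rw [hz, hqi]
              refine hsqle _ (q i) ?_ ((hwval_neg i hneg) ▸ hwt i)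
              rw [Complex.norm_real, Real.norm_eq_abs, abs_of_nonneg (hq0 i)]
              nlinarith [hq0 i, hq1 i]
            · have hz : EE i i = Q' i i - 1 := by
                rw [hQ2z i, hPpdef, Matrix.diagonal_apply_eq, if_pos hpos]
              rw [hz, hqi]
              refine hsqle _ (1 - q i) ?_ ((hwval_pos i hpos) ▸ hwt i)
              have hcast : ((q i : ℝ) : ℂ) - 1 = (((q i - 1 : ℝ)) : ℂ) := by push_cast; ring
              rw [hcast, Complex.norm_real, Real.norm_eq_abs, abs_of_nonpos (by linarith [hq1 i])]
              nlinarith [hq0 i, hq1 i]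
          · have hz : EE i j = Q' i j := by rw [hQ2z j, hPpoff i j hij, sub_zero]
            rw [hz]
            rcases lt_or_gt_of_ne h0i with hneg | hpos
            · refine hsqle _ (q i) ?_ ((hwval_neg i hneg) ▸ hwt i)
              calc ‖Q' i j‖ ^ 2 ≤ q i * q j := habsQ i j
                _ ≤ q i * 1 := mul_le_mul_of_nonneg_left (hq1 j) (hq0 i)
                _ = q i := mul_one _
            · refine hsqle _ (1 - q i) ?_ ((hwval_pos i hpos) ▸ hwt i)
              calc ‖Q' i j‖ ^ 2 ≤ (1 - q i) * (1 - q j) := hoff i j hij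
                _ ≤ (1 - q i) * 1 := mul_le_mul_of_nonneg_left (by linarith [hq0 j]) (by linarith [hq1 i])
                _ = 1 - q i := mul_one _
    have habs := abs_re_trace_mul_le EE B' (Real.sqrt t) (Real.sqrt_nonneg t) hEbound
    calc |((EE * B').trace).re| ≤ Real.sqrt t * ∑ i, ∑ j, ‖B' i j‖ := habs
      _ = (∑ i, ∑ j, ‖B' i j‖) * Real.sqrt t := mul_comm _ _
  · -- final inequality
    have hTN : traceNorm (H + (l:ℂ) • B) =
        2 * ((Q * (H + (l:ℂ) • B)).trace).re - ((H + (l:ℂ) • B).trace).re :=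
      traceNorm_eq_posPart hMl
    have hlin : ((Q * (H + (l:ℂ) • B)).trace).re = ((Q * H).trace).re + l * ((Q * B).trace).re := by
      rw [Matrix.mul_add, Matrix.mul_smul, Matrix.trace_add, Matrix.trace_smul, Complex.add_re]
      congr 1
      rw [smul_eq_mul, Complex.re_ofReal_mul]
    have htrl : ((H + (l:ℂ) • B).trace).re = (H.trace).re + l * (B.trace).re := by
      rw [Matrix.trace_add, Matrix.trace_smul, Complex.add_re, smul_eq_mul, Complex.re_ofReal_mul]
    have hTNH : traceNorm H = 2 * (∑ i, if 0 < d i then d i else 0) - (H.trace).re := by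
      rw [traceNorm_eq_posPart hH, trace_posProj_mul_re hH]
    have hQHle : ((Q * H).trace).re ≤ (∑ i, if 0 < d i then d i else 0) - δ * t := by
      rw [hQH]
      have hδt : δ * t = ∑ i, δ * w i := by rw [htdef, Finset.mul_sum]
      rw [hδt, ← Finset.sum_sub_distrib]
      refine Finset.sum_le_sum fun i _ => ?_
      rcases lt_trichotomy (d i) 0 with hneg | hzero | hpos
      · have hδi : δ ≤ -(d i) := by
          have h := hδ i (ne_of_lt hneg); rwa [abs_of_neg hneg] at h
        rw [if_neg (not_lt.mpr hneg.le), hwval_neg i hneg]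
        nlinarith [hq0 i]
      · have hwv : w i = 0 := by
          rw [hwdef]; dsimp only
          rw [if_neg (by rw [hzero]; exact lt_irrefl 0), if_neg (by rw [hzero]; exact lt_irrefl 0)]
        rw [if_neg (by rw [hzero]; exact lt_irrefl 0), hwv, hzero]
        simp
      · have hδi : δ ≤ d i := by
          have h := hδ i (ne_of_gt hpos); rwa [abs_of_pos hpos] at h
        rw [if_pos hpos, hwval_pos i hpos]
        nlinarith [hq1 i]
    have hBtr : (B.trace).re = ∑ i, (B' i i).re := by
      have h := trace_conj_unitary' U B
      rw [hB'def]
      rw [← h, Matrix.trace, Complex.re_sum]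
      exact Finset.sum_congr rfl fun i _ => by rw [Matrix.diag_apply]
    have hsplitQB : ((Q * B).trace).re = (∑ i, if 0 < d i then (B' i i).re else 0) +
        ((Q2 * B').trace).re + ((EE * B').trace).re := by
      rw [hQB]
      have hdecomp : Q' = Pp + Q2 + EE := by rw [hEEdef]; abel
      rw [hdecomp, Matrix.add_mul, Matrix.add_mul, Matrix.trace_add, Matrix.trace_add,
        Complex.add_re, Complex.add_re]
      congr 2
      rw [hPpdef]
      exact trace_diagProj_mul_re _ B'
    rw [hTN, hlin, htrl, hTNH, hsplitQB, hBtr]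
    linarith [hQHle]


end BJHelpers3

section BJHelpers4
open Matrix
open scoped ComplexOrder

variable {n : ℕ}

private lemma arith_no (δ ε C t u : ℝ) (hδ : 0 < δ) (hε : 0 < ε) (hC : 0 ≤ C)
    (hu0 : 0 ≤ u) (hut : u^2 = t)
    (h : 0 ≤ -2*δ*t - (2*δ*ε/(C^2+2*δ))*ε + 2*(2*δ*ε/(C^2+2*δ))*C*u) : False := by
  have hA : 0 < C^2 + 2*δ := by nlinarith
  have hlamA : (2*δ*ε/(C^2+2*δ))*(C^2+2*δ) = 2*δ*ε := div_mul_cancel₀ _ (ne_of_gt hA)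
  have h2 : 0 ≤ (-2*δ*t)*(C^2+2*δ) - (2*δ*ε)*ε + 2*(2*δ*ε)*C*u := by
    have hmul := mul_nonneg h hA.le
    have hexp : (-2*δ*t - (2*δ*ε/(C^2+2*δ))*ε + 2*(2*δ*ε/(C^2+2*δ))*C*u) * (C^2+2*δ)
        = (-2*δ*t)*(C^2+2*δ) - ((2*δ*ε/(C^2+2*δ))*(C^2+2*δ))*ε
          + 2*((2*δ*ε/(C^2+2*δ))*(C^2+2*δ))*C*u := by ring
    rw [hexp, hlamA] at hmul
    exact hmul
  rw [← hut] at h2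
  -- 0 ≤ -2δu²(C²+2δ) - 2δε² + 4δεCu ; add 2δ(uC-ε)² ≥ 0 to get 0 ≤ -4δ²u²
  have hY : 0 ≤ 2*δ*(u*C - ε)^2 := by positivity
  have husq : u^2 ≤ 0 := by nlinarith [hY, mul_pos hδ hδ]
  have hueq : u = 0 := by nlinarith [sq_nonneg u]
  rw [hueq] at h2
  nlinarith [mul_pos hδ (mul_pos hε hε)]

private lemma mpr_aux {H B : Matrix (Fin n) (Fin n) ℂ} (hH : H.IsHermitian) (hB : B.IsHermitian)
    (l : ℝ) (ε : Fin n → ℝ) (hε : ∀ i, |ε i| ≤ 1)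
    (hsign : ∀ i, ε i * hH.eigenvalues i = |hH.eigenvalues i|)
    (hlB : 0 ≤ l * ∑ i, ε i * (((star (hH.eigenvectorUnitary : Matrix (Fin n) (Fin n) ℂ)) * B *
      (hH.eigenvectorUnitary : Matrix (Fin n) (Fin n) ℂ)) i i).re) :
    traceNorm H ≤ traceNorm (H + (l:ℂ) • B) := by
  classical
  set U := hH.eigenvectorUnitary with hUdef
  set d := hH.eigenvalues with hddef
  set B' := (star (U : Matrix (Fin n) (Fin n) ℂ)) * B * (U : Matrix (Fin n) (Fin n) ℂ) with hB'def
  set X := (U : Matrix (Fin n) (Fin n) ℂ) * Matrix.diagonal (fun i => ((ε i : ℝ) : ℂ)) *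
    star (U : Matrix (Fin n) (Fin n) ℂ) with hXdef
  have h1 : (1 - X).PosSemidef := by
    rw [hXdef, one_sub_conj_diag]
    have hfun : (fun i => 1 - ((ε i : ℝ) : ℂ)) = fun i => Complex.ofReal (1 - ε i) := by
      funext i; push_cast; ring
    rw [hfun]
    exact psd_conj_diag U _ (fun i => by linarith [(abs_le.mp (hε i)).2])
  have h2 : (1 + X).PosSemidef := by
    rw [hXdef, one_add_conj_diag]
    have hfun : (fun i => 1 + ((ε i : ℝ) : ℂ)) = fun i => Complex.ofReal (1 + ε i) := by
      funext i; push_cast; ring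
    rw [hfun]
    exact psd_conj_diag U _ (fun i => by linarith [(abs_le.mp (hε i)).1])
  have hMl : (H + (l:ℂ) • B).IsHermitian := hH.add (smul_hermitian hB l)
  have key := re_trace_mul_le_traceNorm hMl h1 h2
  have hXH : ((X * H).trace).re = ∑ i, |d i| := by
    rw [Matrix.trace_mul_comm]
    have h : (H * X).trace = ∑ i, ((star (U : Matrix (Fin n) (Fin n) ℂ)) * H *
        (U : Matrix (Fin n) (Fin n) ℂ)) i i * ((ε i : ℝ) : ℂ) := by
      rw [hXdef]; exact trace_mul_conj_diag U H _
    rw [h, Complex.re_sum]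
    refine Finset.sum_congr rfl fun i _ => ?_
    rw [star_mul_self_mul_eq_diagonal_aux hH, Matrix.diagonal_apply_eq]
    have : ((RCLike.ofReal ∘ hH.eigenvalues) i * ((ε i : ℝ) : ℂ)).re = d i * ε i := by
      simp [Function.comp, Complex.mul_re, hddef]
    rw [this, mul_comm]
    exact hsign i
  have hXB : ((X * B).trace).re = ∑ i, ε i * (B' i i).re := by
    rw [Matrix.trace_mul_comm]
    have h : (B * X).trace = ∑ i, B' i i * ((ε i : ℝ) : ℂ) := by
      rw [hXdef]; exact trace_mul_conj_diag U B _
    rw [h, Complex.re_sum]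
    refine Finset.sum_congr rfl fun i _ => ?_
    rw [Complex.mul_re]
    simp [mul_comm]
  have hXM : ((X * (H + (l:ℂ) • B)).trace).re = ((X * H).trace).re + l * ((X * B).trace).re := by
    rw [Matrix.mul_add, Matrix.mul_smul, Matrix.trace_add, Matrix.trace_smul, Complex.add_re,
      smul_eq_mul, Complex.re_ofReal_mul]
  rw [traceNorm_hermitian hH]
  rw [hXM, hXH, hXB] at key
  linarith [hlB, key]

end BJHelpers4

section BJMain
open Matrix
open scoped ComplexOrder

variable {n : ℕ}

private lemma trace_mul_proj_re (U : Matrix.unitaryGroup (Fin n) ℂ) (B : Matrix (Fin n) (Fin n) ℂ)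
    (p : Fin n → Prop) [DecidablePred p] :
    ((B * ((U : Matrix (Fin n) (Fin n) ℂ) * Matrix.diagonal (fun i => if p i then (1:ℂ) else 0) *
      star (U : Matrix (Fin n) (Fin n) ℂ))).trace).re
      = ∑ i, if p i then (((star (U : Matrix (Fin n) (Fin n) ℂ)) * B *
          (U : Matrix (Fin n) (Fin n) ℂ)) i i).re else 0 := by
  rw [trace_mul_conj_diag, Complex.re_sum]
  refine Finset.sum_congr rfl fun i _ => ?_
  split <;> simp

set_option maxHeartbeats 1000000 in
theorem stmt_2' {n : ℕ} (H B : Matrix (Fin n) (Fin n) ℂ)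
    (hH : H.IsHermitian) (hB : B.PosSemidef) :
    (∀ l : ℝ, traceNorm H ≤ traceNorm (H + (l : ℂ) • B)) ↔
      (((B * posProj hH).trace).re ≤ (1 / 2) * (B.trace).re ∧
        ((B * negProj hH).trace).re ≤ (1 / 2) * (B.trace).re) := by
  classical
  set U := hH.eigenvectorUnitary with hUdef
  set d := hH.eigenvalues with hddef
  set B' := (star (U : Matrix (Fin n) (Fin n) ℂ)) * B * (U : Matrix (Fin n) (Fin n) ℂ) with hB'def
  have hb0 : ∀ i, 0 ≤ (B' i i).re := fun i => psd_diag_re_nonneg (psd_conj_unitary hB U) i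
  have hplus : ((B * posProj hH).trace).re = ∑ i, if 0 < d i then (B' i i).re else 0 := by
    unfold posProj
    exact trace_mul_proj_re U B _
  have hminus : ((B * negProj hH).trace).re = ∑ i, if d i < 0 then (B' i i).re else 0 := by
    unfold negProj
    exact trace_mul_proj_re U B _
  have hs : (B.trace).re = ∑ i, (B' i i).re := by
    have h := trace_conj_unitary' U B
    rw [hB'def, ← h, Matrix.trace, Complex.re_sum]
    exact Finset.sum_congr rfl fun i _ => by rw [Matrix.diag_apply]
  have hsnn : 0 ≤ ∑ i, (B' i i).re := Finset.sum_nonneg fun i _ => hb0 i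
  constructor
  · intro hBJ
    by_contra hcon
    rw [not_and_or] at hcon
    have hC0 : 0 ≤ ∑ i, ∑ j, ‖B' i j‖ :=
      Finset.sum_nonneg fun i _ => Finset.sum_nonneg fun j _ => norm_nonneg _
    set C := ∑ i, ∑ j, ‖B' i j‖ with hCdef
    rcases hcon with h | h
    · push_neg at h
      rw [hplus, hs] at h
      have hex : ∃ i, 0 < d i := by
        by_contra hno
        push_neg at hno
        have hz : (∑ i, if 0 < d i then (B' i i).re else 0) = 0 :=
          Finset.sum_eq_zero fun i _ => if_neg (not_lt.mpr (hno i))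
        rw [hz] at h
        linarith
      obtain ⟨i0, hi0⟩ := hex
      have hne : (Finset.univ.filter (fun i => d i ≠ 0)).Nonempty :=
        ⟨i0, Finset.mem_filter.mpr ⟨Finset.mem_univ _, ne_of_gt hi0⟩⟩
      set δ := (Finset.univ.filter (fun i => d i ≠ 0)).inf' hne (fun i => |d i|) with hδdef
      have hδpos : 0 < δ := by
        rw [hδdef, Finset.lt_inf'_iff]
        intro i hi
        exact abs_pos.mpr (Finset.mem_filter.mp hi).2
      have hδle : ∀ i, d i ≠ 0 → δ ≤ |d i| := fun i hi =>
        Finset.inf'_le (fun j => |d j|) (Finset.mem_filter.mpr ⟨Finset.mem_univ _, hi⟩)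
      set εA := 2*(∑ i, if 0 < d i then (B' i i).re else 0) - (∑ i, (B' i i).re) with hεdef
      have hεpos : 0 < εA := by rw [hεdef]; linarith
      set lam := 2*δ*εA/(C^2+2*δ) with hlam
      have hApos : 0 < C^2 + 2*δ := by nlinarith
      have hlampos : 0 < lam := by
        rw [hlam]
        exact div_pos (by nlinarith) hApos
      obtain ⟨t, c0, e, ht0, hc00, hc0le, heabs, hineq⟩ := core_bound hH hB δ hδle (-lam)
      have hBJl := hBJ (-lam)
      set u := Real.sqrt t with hu
      have hu0 : 0 ≤ u := Real.sqrt_nonneg t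
      have hut : u^2 = t := Real.sq_sqrt ht0
      have hstep : 0 ≤ -2*δ*t + (-lam)*(2*((∑ i, if 0 < d i then (B' i i).re else 0) + c0 + e)
          - (∑ i, (B' i i).re)) := by linarith [hBJl, hineq]
      have he1 : -lam * e ≤ lam * (C*u) := by
        calc -lam * e = lam * (-e) := by ring
          _ ≤ lam * |e| := mul_le_mul_of_nonneg_left (neg_le_abs e) hlampos.le
          _ ≤ lam * (C*u) := mul_le_mul_of_nonneg_left (by rw [hu]; exact heabs) hlampos.le
      have he2 : -lam * c0 ≤ 0 := mul_nonpos_of_nonpos_of_nonneg (by linarith) hc00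
      have hexp : (-lam)*(2*((∑ i, if 0 < d i then (B' i i).re else 0) + c0 + e)
          - (∑ i, (B' i i).re)) = -lam*εA + 2*(-lam*c0) + 2*(-lam*e) := by rw [hεdef]; ring
      refine arith_no δ εA C t u hδpos hεpos hC0 hu0 hut ?_
      rw [← hlam]
      rw [hexp] at hstep
      linarith [he1, he2]
    · push_neg at h
      rw [hminus, hs] at h
      have hex : ∃ i, d i < 0 := by
        by_contra hno
        push_neg at hno
        have hz : (∑ i, if d i < 0 then (B' i i).re else 0) = 0 :=
          Finset.sum_eq_zero fun i _ => if_neg (not_lt.mpr (hno i))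
        rw [hz] at h
        linarith
      obtain ⟨i0, hi0⟩ := hex
      have hne : (Finset.univ.filter (fun i => d i ≠ 0)).Nonempty :=
        ⟨i0, Finset.mem_filter.mpr ⟨Finset.mem_univ _, ne_of_lt hi0⟩⟩
      set δ := (Finset.univ.filter (fun i => d i ≠ 0)).inf' hne (fun i => |d i|) with hδdef
      have hδpos : 0 < δ := by
        rw [hδdef, Finset.lt_inf'_iff]
        intro i hi
        exact abs_pos.mpr (Finset.mem_filter.mp hi).2
      have hδle : ∀ i, d i ≠ 0 → δ ≤ |d i| := fun i hi =>
        Finset.inf'_le (fun j => |d j|) (Finset.mem_filter.mpr ⟨Finset.mem_univ _, hi⟩)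
      set εB := 2*(∑ i, if d i < 0 then (B' i i).re else 0) - (∑ i, (B' i i).re) with hεdef
      have hεpos : 0 < εB := by rw [hεdef]; linarith
      set lam := 2*δ*εB/(C^2+2*δ) with hlam
      have hApos : 0 < C^2 + 2*δ := by nlinarith
      have hlampos : 0 < lam := by
        rw [hlam]
        exact div_pos (by nlinarith) hApos
      obtain ⟨t, c0, e, ht0, hc00, hc0le, heabs, hineq⟩ := core_bound hH hB δ hδle lam
      have hBJl := hBJ lam
      set u := Real.sqrt t with hu
      have hu0 : 0 ≤ u := Real.sqrt_nonneg t
      have hut : u^2 = t := Real.sq_sqrt ht0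
      have hpart : (∑ i, if 0 < d i then (B' i i).re else 0)
          + (∑ i, if d i < 0 then (B' i i).re else 0)
          + (∑ i, if d i = 0 then (B' i i).re else 0) = ∑ i, (B' i i).re := by
        rw [← Finset.sum_add_distrib, ← Finset.sum_add_distrib]
        refine Finset.sum_congr rfl fun i _ => ?_
        rcases lt_trichotomy (d i) 0 with hlt | heq | hgt
        · rw [if_neg (not_lt.mpr hlt.le), if_pos hlt, if_neg (ne_of_lt hlt)]; ring
        · rw [if_neg (by rw [heq]; exact lt_irrefl 0), if_neg (by rw [heq]; exact lt_irrefl 0),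
            if_pos heq]; ring
        · rw [if_pos hgt, if_neg (not_lt.mpr hgt.le), if_neg (ne_of_gt hgt)]; ring
      have hstep : 0 ≤ -2*δ*t + lam*(2*((∑ i, if 0 < d i then (B' i i).re else 0) + c0 + e)
          - (∑ i, (B' i i).re)) := by linarith [hBJl, hineq]
      have he1 : lam * e ≤ lam * (C*u) := by
        calc lam * e ≤ lam * |e| := mul_le_mul_of_nonneg_left (le_abs_self e) hlampos.le
          _ ≤ lam * (C*u) := mul_le_mul_of_nonneg_left (by rw [hu]; exact heabs) hlampos.le
      have he2 : lam * c0 ≤ lam * (∑ i, if d i = 0 then (B' i i).re else 0) :=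
        mul_le_mul_of_nonneg_left hc0le hlampos.le
      have hval : 2*(∑ i, if 0 < d i then (B' i i).re else 0)
          + 2*(∑ i, if d i = 0 then (B' i i).re else 0) - (∑ i, (B' i i).re) = -εB := by
        rw [hεdef]; linarith [hpart]
      refine arith_no δ εB C t u hδpos hεpos hC0 hu0 hut ?_
      rw [← hlam]
      nlinarith [hstep, he1, he2, hval]
  · rintro ⟨h1, h2⟩ l
    have h1' := h1
    have h2' := h2
    rw [hplus, hs] at h1'
    rw [hminus, hs] at h2'
    rcases le_or_gt 0 l with hl | hl
    · refine mpr_aux hH hB.1 l (fun i => if d i < 0 then -1 else 1) (fun i => ?_) (fun i => ?_) ?_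
      · split <;> norm_num
      · rcases lt_trichotomy (d i) 0 with hlt | heq | hgt
        · rw [if_pos hlt, abs_of_neg hlt]; ring
        · rw [heq, show hH.eigenvalues i = (0:ℝ) from heq]; simp
        · rw [if_neg (not_lt.mpr hgt.le), abs_of_pos hgt]; ring
      · have hsum : ∑ i, (if d i < 0 then (-1:ℝ) else 1) * (B' i i).re
            = (∑ i, (B' i i).re) - 2*(∑ i, if d i < 0 then (B' i i).re else 0) := by
          rw [Finset.mul_sum, ← Finset.sum_sub_distrib]
          refine Finset.sum_congr rfl fun i _ => ?_
          by_cases hi : d i < 0 <;> simp [hi] <;> ring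
        have : (0:ℝ) ≤ (∑ i, (B' i i).re) - 2*(∑ i, if d i < 0 then (B' i i).re else 0) := by
          linarith
        calc (0:ℝ) ≤ l * ((∑ i, (B' i i).re) - 2*(∑ i, if d i < 0 then (B' i i).re else 0)) :=
              mul_nonneg hl this
          _ = l * ∑ i, (if d i < 0 then (-1:ℝ) else 1) * (B' i i).re := by rw [hsum]
    · refine mpr_aux hH hB.1 l (fun i => if 0 < d i then 1 else -1) (fun i => ?_) (fun i => ?_) ?_
      · split <;> norm_num
      · rcases lt_trichotomy (d i) 0 with hlt | heq | hgt
        · rw [if_neg (not_lt.mpr hlt.le), abs_of_neg hlt]; ring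
        · rw [heq, show hH.eigenvalues i = (0:ℝ) from heq]; simp
        · rw [if_pos hgt, abs_of_pos hgt]; ring
      · have hsum : ∑ i, (if 0 < d i then (1:ℝ) else -1) * (B' i i).re
            = 2*(∑ i, if 0 < d i then (B' i i).re else 0) - (∑ i, (B' i i).re) := by
          rw [Finset.mul_sum, ← Finset.sum_sub_distrib]
          refine Finset.sum_congr rfl fun i _ => ?_
          by_cases hi : 0 < d i <;> simp [hi] <;> ring
        have hnp : 2*(∑ i, if 0 < d i then (B' i i).re else 0) - (∑ i, (B' i i).re) ≤ 0 := by
          linarith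
        calc (0:ℝ) ≤ l * (2*(∑ i, if 0 < d i then (B' i i).re else 0) - (∑ i, (B' i i).re)) := by
              nlinarith [mul_nonneg (neg_nonneg.mpr hl.le) (neg_nonneg.mpr hnp)]
          _ = l * ∑ i, (if 0 < d i then (1:ℝ) else -1) * (B' i i).re := by rw [hsum]

end BJMain

theorem stmt_2 {n : ℕ} (H B : Matrix (Fin n) (Fin n) ℂ)
    (hH : H.IsHermitian) (hB : B.PosSemidef) :
    (∀ l : ℝ, traceNorm H ≤ traceNorm (H + (l : ℂ) • B)) ↔
      (((B * posProj hH).trace).re ≤ (1 / 2) * (B.trace).re ∧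
        ((B * negProj hH).trace).re ≤ (1 / 2) * (B.trace).re) :=
  stmt_2' H B hH hB
end

section
/- Let n be odd and let H be an n×n Hermitian matrix that is Birkhoff–James orthogonal in the trace norm to eⱼeⱼ* for each 1 ≤ j ≤ n. Then 0 is an eigenvalue of H. -/
open Matrix BigOperators

section aux
open Polynomial
variable {m : Type*} [Fintype m] [DecidableEq m]

lemma charpoly_unitary_conj (U : Matrix.unitaryGroup m ℂ) (A : Matrix m m ℂ) :
    ((U : Matrix m m ℂ) * A * star (U : Matrix m m ℂ)).charpoly = A.charpoly := by
  have hmap : ∀ (M N : Matrix m m ℂ), (M * N).map (C : ℂ →+* ℂ[X]) = M.map C * N.map C :=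
    fun M N => Matrix.map_mul
  have hPQ : (U : Matrix m m ℂ).map (C : ℂ →+* ℂ[X]) *
      (star (U : Matrix m m ℂ)).map C = 1 := by
    rw [← hmap, U.2.2, Matrix.map_one _ (map_zero _) (map_one _)]
  have hQP : (star (U : Matrix m m ℂ)).map (C : ℂ →+* ℂ[X]) *
      (U : Matrix m m ℂ).map C = 1 := by
    rw [← hmap, U.2.1, Matrix.map_one _ (map_zero _) (map_one _)]
  have hscalar : Matrix.scalar m (X : ℂ[X]) = (X : ℂ[X]) • (1 : Matrix m m ℂ[X]) := by
    simp [Matrix.scalar, Matrix.smul_one_eq_diagonal]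
  have hchar : charmatrix ((U : Matrix m m ℂ) * A * star (U : Matrix m m ℂ)) =
      (U : Matrix m m ℂ).map (C : ℂ →+* ℂ[X]) * charmatrix A *
        (star (U : Matrix m m ℂ)).map C := by
    unfold charmatrix
    rw [Matrix.mul_sub, Matrix.sub_mul]
    congr 1
    · rw [hscalar, mul_smul_comm, mul_one, smul_mul_assoc, hPQ]
    · simp only [RingHom.mapMatrix_apply]
      rw [hmap, hmap]
  rw [Matrix.charpoly, hchar, det_mul, det_mul, mul_comm, ← mul_assoc, ← det_mul, hQP]
  simp [Matrix.charpoly]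

lemma charpoly_diagonal' (d : m → ℂ) :
    (Matrix.diagonal d).charpoly = ∏ i, (X - C (d i)) := by
  rw [Matrix.charpoly]
  have : charmatrix (Matrix.diagonal d) = Matrix.diagonal (fun i => (X : ℂ[X]) - C (d i)) := by
    ext i j
    by_cases h : i = j
    · subst h; simp [charmatrix_apply_eq]
    · simp [charmatrix_apply_ne _ _ _ h, Matrix.diagonal_apply_ne _ h]
  rw [this, Matrix.det_diagonal]

/-- If a Hermitian matrix has an explicit unitary diagonalization with real values `d`, then the
multiset of its eigenvalues equals the multiset of the `d i`. -/
lemma eig_multiset_eq {M : Matrix m m ℂ} (hM : M.IsHermitian) (U : Matrix.unitaryGroup m ℂ)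
    (d : m → ℝ)
    (hdiag : M = (U : Matrix m m ℂ) * Matrix.diagonal (fun i => (d i : ℂ)) *
      star (U : Matrix m m ℂ)) :
    Multiset.map hM.eigenvalues Finset.univ.val = Multiset.map d Finset.univ.val := by
  have key : ∀ (V : Matrix.unitaryGroup m ℂ) (e : m → ℝ),
      M = (V : Matrix m m ℂ) * Matrix.diagonal (fun i => (e i : ℂ)) * star (V : Matrix m m ℂ) →
      M.charpoly.roots = Multiset.map (fun i => (e i : ℂ)) Finset.univ.val := by
    intro V e he
    rw [he, charpoly_unitary_conj, charpoly_diagonal']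
    have : (∏ i, (X - C ((e i : ℂ)))) =
        ((Multiset.map (fun i => (e i : ℂ)) Finset.univ.val).map (fun a => X - C a)).prod := by
      rw [Multiset.map_map]; rfl
    rw [this, Polynomial.roots_multiset_prod_X_sub_C]
  have h1 := key hM.eigenvectorUnitary hM.eigenvalues (by
    exact hM.spectral_theorem)
  have h2 := key U d hdiag
  have : Multiset.map (fun i => ((hM.eigenvalues i : ℂ))) Finset.univ.val =
      Multiset.map (fun i => ((d i : ℂ))) Finset.univ.val := by rw [← h1, ← h2]
  have hcast : ∀ (f : m → ℝ), Multiset.map (fun i => ((f i : ℂ))) Finset.univ.val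
      = Multiset.map (fun x : ℝ => (x : ℂ)) (Multiset.map f Finset.univ.val) := by
    intro f; rw [Multiset.map_map]; rfl
  rw [hcast, hcast] at this
  exact Multiset.map_injective Complex.ofReal_injective this


lemma traceNorm_hermitian_s8 {X : Matrix m m ℂ} (hX : X.IsHermitian) :
    traceNorm X = ∑ i, |hX.eigenvalues i| := by
  have hsq : Xᴴ * X = (hX.eigenvectorUnitary : Matrix m m ℂ) *
      Matrix.diagonal (fun i => ((hX.eigenvalues i ^ 2 : ℝ) : ℂ)) *
      star (hX.eigenvectorUnitary : Matrix m m ℂ) := by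
    conv_lhs => rw [hX.eq, hX.spectral_theorem]
    set V := (hX.eigenvectorUnitary : Matrix m m ℂ)
    have hVV : star V * V = 1 := hX.eigenvectorUnitary.2.1
    have : Matrix.diagonal ((fun (a:ℝ) => (a:ℂ)) ∘ hX.eigenvalues) * Matrix.diagonal
        ((fun (a:ℝ) => (a:ℂ)) ∘ hX.eigenvalues) =
        Matrix.diagonal (fun i => ((hX.eigenvalues i ^ 2 : ℝ) : ℂ)) := by
      rw [Matrix.diagonal_mul_diagonal]
      congr 1; funext i; simp [Matrix.diagonal]; push_cast; ring
    calc (V * Matrix.diagonal ((fun (a:ℝ) => (a:ℂ)) ∘ hX.eigenvalues) * star V) *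
          (V * Matrix.diagonal ((fun (a:ℝ) => (a:ℂ)) ∘ hX.eigenvalues) * star V)
        = V * (Matrix.diagonal ((fun (a:ℝ) => (a:ℂ)) ∘ hX.eigenvalues) * ((star V * V) *
            Matrix.diagonal ((fun (a:ℝ) => (a:ℂ)) ∘ hX.eigenvalues))) * star V := by
          simp only [Matrix.mul_assoc]
      _ = _ := by rw [hVV, Matrix.one_mul, this]
  have hmul := eig_multiset_eq (Matrix.isHermitian_conjTranspose_mul_self X)
    hX.eigenvectorUnitary (fun i => hX.eigenvalues i ^ 2) hsq
  unfold traceNorm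
  have lhs : ∑ i, Real.sqrt ((Matrix.isHermitian_conjTranspose_mul_self X).eigenvalues i) =
      (Multiset.map (Real.sqrt ∘ (Matrix.isHermitian_conjTranspose_mul_self X).eigenvalues)
        Finset.univ.val).sum := rfl
  have rhs : ∑ i, |hX.eigenvalues i| =
      (Multiset.map ((fun t => Real.sqrt (t^2)) ∘ hX.eigenvalues) Finset.univ.val).sum := by
    rw [show ((fun t => Real.sqrt (t^2)) ∘ hX.eigenvalues) = fun i => |hX.eigenvalues i| from
      funext fun i => Real.sqrt_sq_eq_abs _]
    rfl
  rw [lhs, rhs, ← Multiset.map_map Real.sqrt, hmul, Multiset.map_map]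
  rfl


lemma trace_mul_stdBasis (A : Matrix m m ℂ) (j : m) :
    Matrix.trace (A * Matrix.single j j 1) = A j j := by
  simp [Matrix.trace, Matrix.mul_apply, Matrix.single, Matrix.diag, ite_and,
    Finset.sum_ite_eq]

lemma conj_unitary_trace (V : Matrix.unitaryGroup m ℂ) (M : Matrix m m ℂ) :
    Matrix.trace ((V : Matrix m m ℂ) * M * star (V : Matrix m m ℂ)) = Matrix.trace M := by
  rw [Matrix.trace_mul_cycle, V.2.1, Matrix.one_mul]

lemma key_trace (H X : Matrix m m ℂ) (hH : H.IsHermitian) (hX : X.IsHermitian) (j : m) (l : ℝ)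
    (hXdef : X = H + (l : ℂ) • Matrix.single j j 1) (ε' : m → ℝ) :
    ∑ k, ε' k * hX.eigenvalues k =
      (∑ k, ∑ i, ε' k * hH.eigenvalues i *
        Complex.normSq ((star (hX.eigenvectorUnitary : Matrix m m ℂ) *
          (hH.eigenvectorUnitary : Matrix m m ℂ)) k i))
      + l * ∑ k, ε' k * Complex.normSq ((hX.eigenvectorUnitary : Matrix m m ℂ) j k) := by
  set V := (hX.eigenvectorUnitary : Matrix m m ℂ) with hV
  set U := (hH.eigenvectorUnitary : Matrix m m ℂ) with hU
  set G := star V * U with hG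
  set E' : Matrix m m ℂ := Matrix.diagonal (fun k => (ε' k : ℂ)) with hE'
  set S' := V * E' * star V with hS'
  have hVV : star V * V = 1 := hX.eigenvectorUnitary.2.1
  have hVV' : V * star V = 1 := hX.eigenvectorUnitary.2.2
  -- step 1
  have step1 : Matrix.trace (S' * X) = ((∑ k, ε' k * hX.eigenvalues k : ℝ) : ℂ) := by
    conv_lhs => rw [hX.spectral_theorem, Unitary.conjStarAlgAut_apply]
    have : S' * (V * Matrix.diagonal (RCLike.ofReal ∘ hX.eigenvalues) * star V)
        = V * (E' * Matrix.diagonal (RCLike.ofReal ∘ hX.eigenvalues)) * star V := by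
      rw [hS']
      calc V * E' * star V * (V * Matrix.diagonal (RCLike.ofReal ∘ hX.eigenvalues) * star V)
          = V * (E' * ((star V * V) * Matrix.diagonal (RCLike.ofReal ∘ hX.eigenvalues))) *
            star V := by simp only [Matrix.mul_assoc]
        _ = _ := by rw [hVV, Matrix.one_mul, Matrix.mul_assoc]
    rw [this, conj_unitary_trace hX.eigenvectorUnitary, Matrix.diagonal_mul_diagonal,
      Matrix.trace_diagonal]
    push_cast
    rfl
  -- step 3
  have step3 : Matrix.trace (S' * Matrix.single j j 1)
      = ((∑ k, ε' k * Complex.normSq (V j k) : ℝ) : ℂ) := by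
    rw [trace_mul_stdBasis]
    rw [hS', hE', Matrix.mul_apply]
    simp only [Matrix.mul_diagonal]
    push_cast
    congr 1
    funext k
    have hst : (star V) k j = starRingEnd ℂ (V j k) := rfl
    rw [hst, show V j k * (ε' k : ℂ) * starRingEnd ℂ (V j k)
      = (ε' k : ℂ) * (V j k * starRingEnd ℂ (V j k)) by ring, Complex.mul_conj]
  -- step 2
  have step2 : Matrix.trace (S' * H) =
      ((∑ k, ∑ i, ε' k * hH.eigenvalues i * Complex.normSq (G k i) : ℝ) : ℂ) := by
    conv_lhs => rw [hH.spectral_theorem, Unitary.conjStarAlgAut_apply]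
    have assoc1 : S' * (U * Matrix.diagonal (RCLike.ofReal ∘ hH.eigenvalues) * star U)
        = V * (E' * (G * Matrix.diagonal (RCLike.ofReal ∘ hH.eigenvalues) * star G)) * star V := by
      rw [hS', hG, Matrix.star_mul, star_star]
      simp only [Matrix.mul_assoc]
      rw [show V * star V = (1 : Matrix m m ℂ) from hVV']
      simp only [Matrix.mul_one]
    rw [assoc1, conj_unitary_trace hX.eigenvectorUnitary]
    simp only [Matrix.trace, Matrix.diag, hE', Matrix.diagonal_mul]
    push_cast
    congr 1
    funext k
    have inner : (G * Matrix.diagonal (RCLike.ofReal ∘ hH.eigenvalues) * star G : Matrix m m ℂ) k k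
        = ∑ i, ((hH.eigenvalues i : ℂ) * Complex.normSq (G k i)) := by
      rw [Matrix.mul_apply]
      congr 1
      funext i
      rw [Matrix.mul_diagonal]
      have hst : (star G) i k = starRingEnd ℂ (G k i) := rfl
      rw [hst, show G k i * ((RCLike.ofReal ∘ hH.eigenvalues) i) * starRingEnd ℂ (G k i)
        = ((RCLike.ofReal ∘ hH.eigenvalues) i) * (G k i * starRingEnd ℂ (G k i)) by
          ring, Complex.mul_conj]
      rfl
    rw [inner, Finset.mul_sum]
    congr 1
    funext i
    push_cast
    ring
  -- combine
  have comb : Matrix.trace (S' * X) = Matrix.trace (S' * H)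
      + (l : ℂ) * Matrix.trace (S' * Matrix.single j j 1) := by
    rw [hXdef, Matrix.mul_add, Matrix.trace_add, Matrix.mul_smul, Matrix.trace_smul]
    simp
  rw [step1, step2, step3] at comb
  exact_mod_cast comb

/-- row sums of squared moduli of a unitary matrix are 1 -/
lemma unitary_row_sum (W : Matrix.unitaryGroup m ℂ) (j : m) :
    ∑ k, Complex.normSq ((W : Matrix m m ℂ) j k) = 1 := by
  have h := congrArg (fun M : Matrix m m ℂ => M j j) W.2.2
  simp only [Matrix.mul_apply, Matrix.one_apply_eq] at h
  have : ∀ k, (W : Matrix m m ℂ) j k * (star (W : Matrix m m ℂ)) k j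
      = ((Complex.normSq ((W : Matrix m m ℂ) j k) : ℝ) : ℂ) := by
    intro k
    have : (star (W : Matrix m m ℂ)) k j = starRingEnd ℂ ((W : Matrix m m ℂ) j k) := rfl
    rw [this, Complex.mul_conj]
  rw [Finset.sum_congr rfl fun k _ => this k] at h
  exact_mod_cast h

lemma unitary_col_sum (W : Matrix.unitaryGroup m ℂ) (i : m) :
    ∑ k, Complex.normSq ((W : Matrix m m ℂ) k i) = 1 := by
  have h := congrArg (fun M : Matrix m m ℂ => M i i) W.2.1
  simp only [Matrix.mul_apply, Matrix.one_apply_eq] at h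
  have : ∀ k, (star (W : Matrix m m ℂ)) i k * (W : Matrix m m ℂ) k i
      = ((Complex.normSq ((W : Matrix m m ℂ) k i) : ℝ) : ℂ) := by
    intro k
    have h2 : (star (W : Matrix m m ℂ)) i k = starRingEnd ℂ ((W : Matrix m m ℂ) k i) := rfl
    rw [h2, mul_comm, Complex.mul_conj]
  rw [Finset.sum_congr rfl fun k _ => this k] at h
  exact_mod_cast h

lemma unitary_orth (W : Matrix.unitaryGroup m ℂ) (i i' : m) :
    ∑ k, starRingEnd ℂ ((W : Matrix m m ℂ) k i) * (W : Matrix m m ℂ) k i'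
      = if i = i' then 1 else 0 := by
  have h := congrArg (fun M : Matrix m m ℂ => M i i') W.2.1
  simp only [Matrix.mul_apply] at h
  have hsc : ∀ k, starRingEnd ℂ ((W : Matrix m m ℂ) k i) * (W : Matrix m m ℂ) k i'
      = (star (W : Matrix m m ℂ)) i k * (W : Matrix m m ℂ) k i' := fun k => rfl
  rw [Finset.sum_congr rfl fun k _ => hsc k, h, Matrix.one_apply]


lemma sum_rot {M : Type*} [AddCommMonoid M] (f : m → m → m → M) :
    ∑ i, ∑ i', ∑ k, f i i' k = ∑ k, ∑ i, ∑ i', f i i' k := by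
  rw [show (∑ i, ∑ i', ∑ k, f i i' k) = ∑ i, ∑ k, ∑ i', f i i' k from
    Finset.sum_congr rfl fun i _ => Finset.sum_comm]
  exact Finset.sum_comm

lemma core_ineq (G : Matrix m m ℂ) (w v : m → ℂ) (eps eps' : m → ℝ)
    (heps : ∀ i, eps i = 1 ∨ eps i = -1)
    (heps' : ∀ k, eps' k = 1 ∨ eps' k = -1)
    (hGrow : ∀ k, ∑ i, Complex.normSq (G k i) = 1)
    (hGcol : ∀ i i', ∑ k, starRingEnd ℂ (G k i) * G k i' = if i = i' then 1 else 0)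
    (hw : ∑ i, Complex.normSq (w i) = 1)
    (hrel : ∀ k, v k = ∑ i, G k i * w i) :
    |∑ k, eps' k * Complex.normSq (v k) - ∑ i, eps i * Complex.normSq (w i)|
      ≤ 2 * Real.sqrt (Fintype.card m) *
        Real.sqrt (∑ k, ∑ i, (if eps i = eps' k then 0 else 1) * Complex.normSq (G k i)) := by
  classical
  set b : m → m → ℝ := fun k i => if eps i = eps' k then 0 else 1 with hb
  have hb01 : ∀ k i, b k i = 0 ∨ b k i = 1 := by
    intro k i; by_cases h : eps i = eps' k <;> simp [hb, h]
  set Bd : ℝ := ∑ k, ∑ i, b k i * Complex.normSq (G k i) with hBd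
  have hBd0 : 0 ≤ Bd := by
    apply Finset.sum_nonneg; intro k _; apply Finset.sum_nonneg; intro i _
    rcases hb01 k i with h | h <;> simp [h, Complex.normSq_nonneg]
  -- Z1 identity
  have hZ1 : (∑ i, ∑ i', ∑ k, starRingEnd ℂ (w i) * starRingEnd ℂ (G k i) * G k i' * w i' *
      ((eps' k : ℝ) : ℂ)) = ((∑ k, eps' k * Complex.normSq (v k) : ℝ) : ℂ) := by
    rw [sum_rot]
    push_cast
    refine Finset.sum_congr rfl fun k _ => ?_
    have expand : (∑ i, ∑ i', starRingEnd ℂ (w i) * starRingEnd ℂ (G k i) * G k i' * w i' *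
        ((eps' k : ℝ) : ℂ)) = ((eps' k : ℝ) : ℂ) *
          ((∑ i, starRingEnd ℂ (w i) * starRingEnd ℂ (G k i)) * (∑ i', G k i' * w i')) := by
      rw [Finset.sum_mul_sum]
      simp only [Finset.mul_sum]
      refine Finset.sum_congr rfl fun i _ => ?_
      refine Finset.sum_congr rfl fun i' _ => ?_
      ring
    rw [expand]
    have hconj : (∑ i, starRingEnd ℂ (w i) * starRingEnd ℂ (G k i)) = starRingEnd ℂ (v k) := by
      rw [hrel k, map_sum]
      refine Finset.sum_congr rfl fun i _ => ?_
      rw [_root_.map_mul]; ring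
    rw [hconj, ← hrel k]
    rw [show starRingEnd ℂ (v k) * v k = ((Complex.normSq (v k) : ℝ) : ℂ) by
      rw [mul_comm, Complex.mul_conj]]
  -- Z2 identity
  have hZ2 : (∑ i, ∑ i', ∑ k, starRingEnd ℂ (w i) * starRingEnd ℂ (G k i) * G k i' * w i' *
      ((eps i : ℝ) : ℂ)) = ((∑ i, eps i * Complex.normSq (w i) : ℝ) : ℂ) := by
    push_cast
    refine Finset.sum_congr rfl fun i _ => ?_
    have expand : (∑ i', ∑ k, starRingEnd ℂ (w i) * starRingEnd ℂ (G k i) * G k i' * w i' *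
        ((eps i : ℝ) : ℂ)) = ∑ i', starRingEnd ℂ (w i) * w i' * ((eps i : ℝ) : ℂ) *
          (∑ k, starRingEnd ℂ (G k i) * G k i') := by
      refine Finset.sum_congr rfl fun i' _ => ?_
      rw [Finset.mul_sum]
      refine Finset.sum_congr rfl fun k _ => ?_
      ring
    rw [expand]
    have : ∀ i', starRingEnd ℂ (w i) * w i' * ((eps i : ℝ) : ℂ) *
        (∑ k, starRingEnd ℂ (G k i) * G k i') =
        if i = i' then starRingEnd ℂ (w i) * w i' * ((eps i : ℝ) : ℂ) else 0 := by
      intro i'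
      rw [hGcol i i']
      by_cases h : i = i' <;> simp [h]
    rw [Finset.sum_congr rfl fun i' _ => this i', Finset.sum_ite_eq]
    simp only [Finset.mem_univ, if_true]
    rw [show starRingEnd ℂ (w i) * w i = ((Complex.normSq (w i) : ℝ) : ℂ) by
      rw [mul_comm, Complex.mul_conj]]
    push_cast
    ring
  -- the main combination
  set a1 : ℝ := ∑ k, eps' k * Complex.normSq (v k) with ha1
  set a2 : ℝ := ∑ i, eps i * Complex.normSq (w i) with ha2
  have hZid : ((a1 - a2 : ℝ) : ℂ) = ∑ i, ∑ i', ∑ k,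
      starRingEnd ℂ (w i) * starRingEnd ℂ (G k i) * G k i' * w i' *
        (((eps' k : ℝ) : ℂ) - ((eps i : ℝ) : ℂ)) := by
    rw [Complex.ofReal_sub, ← hZ1, ← hZ2, ← Finset.sum_sub_distrib]
    refine Finset.sum_congr rfl fun i _ => ?_
    rw [← Finset.sum_sub_distrib]
    refine Finset.sum_congr rfl fun i' _ => ?_
    rw [← Finset.sum_sub_distrib]
    refine Finset.sum_congr rfl fun k _ => ?_
    ring
  have habs1 : |a1 - a2| = norm ((a1 - a2 : ℝ) : ℂ) := by rw [Complex.norm_real, Real.norm_eq_abs]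
  set A : m → m → m → ℝ := fun i i' k => norm (w i) * norm (G k i) *
    norm (G k i') * norm (w i') * (2 * b k i) with hA
  have hterm : ∀ i i' k, norm (starRingEnd ℂ (w i) * starRingEnd ℂ (G k i) * G k i' * w i' *
      (((eps' k : ℝ) : ℂ) - ((eps i : ℝ) : ℂ))) ≤ A i i' k := by
    intro i i' k
    rw [norm_mul, norm_mul, norm_mul, norm_mul,
      Complex.norm_conj, Complex.norm_conj]
    have hdiff : norm (((eps' k : ℝ) : ℂ) - ((eps i : ℝ) : ℂ)) ≤ 2 * b k i := by
      rw [← Complex.ofReal_sub, Complex.norm_real, Real.norm_eq_abs]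
      rcases heps i with h1 | h1 <;> rcases heps' k with h2 | h2 <;>
        simp [hb, h1, h2] <;> norm_num
    rw [hA]
    have hnn : 0 ≤ norm (w i) * norm (G k i) * norm (G k i') *
        norm (w i') := by positivity
    exact mul_le_mul_of_nonneg_left hdiff hnn
  have htri : norm ((a1 - a2 : ℝ) : ℂ) ≤ ∑ i, ∑ i', ∑ k, A i i' k := by
    rw [hZid]
    refine le_trans (norm_sum_le _ _) (Finset.sum_le_sum fun i _ => ?_)
    refine le_trans (norm_sum_le _ _) (Finset.sum_le_sum fun i' _ => ?_)
    exact le_trans (norm_sum_le _ _) (Finset.sum_le_sum fun k _ => hterm i i' k)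
  have hrot : ∑ i, ∑ i', ∑ k, A i i' k = ∑ k, ∑ i, ∑ i', A i i' k := sum_rot A
  have hinner : ∀ k, ∑ i', norm (G k i') * norm (w i') ≤ 1 := by
    intro k
    have := Real.sum_mul_le_sqrt_mul_sqrt Finset.univ (fun i' => norm (G k i'))
      (fun i' => norm (w i'))
    simp only [Complex.sq_norm] at this
    rw [hGrow k, hw] at this
    simpa using this
  have hstep2 : ∑ k, ∑ i, ∑ i', A i i' k ≤
      ∑ k, ∑ i, 2 * (b k i * (norm (w i) * norm (G k i))) := by
    refine Finset.sum_le_sum fun k _ => Finset.sum_le_sum fun i _ => ?_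
    have : ∑ i', A i i' k = (2 * (b k i * (norm (w i) * norm (G k i)))) *
        ∑ i', norm (G k i') * norm (w i') := by
      rw [Finset.mul_sum]
      refine Finset.sum_congr rfl fun i' _ => ?_
      rw [hA]; ring
    rw [this]
    have hnn : 0 ≤ 2 * (b k i * (norm (w i) * norm (G k i))) := by
      rcases hb01 k i with h | h <;> rw [h] <;> positivity
    calc (2 * (b k i * (norm (w i) * norm (G k i)))) *
          ∑ i', norm (G k i') * norm (w i')
        ≤ (2 * (b k i * (norm (w i) * norm (G k i)))) * 1 :=
          mul_le_mul_of_nonneg_left (hinner k) hnn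
      _ = 2 * (b k i * (norm (w i) * norm (G k i))) := mul_one _
  have hfinal : ∑ k, ∑ i, b k i * (norm (w i) * norm (G k i)) ≤
      Real.sqrt (Fintype.card m) * Real.sqrt Bd := by
    have hsplit : ∀ k i, b k i * (norm (w i) * norm (G k i)) =
        (b k i * norm (w i)) * (b k i * norm (G k i)) := by
      intro k i
      rcases hb01 k i with h | h <;> rw [h] <;> ring
    have hprod := Real.sum_mul_le_sqrt_mul_sqrt (Finset.univ : Finset (m × m))
      (fun p => b p.1 p.2 * norm (w p.2)) (fun p => b p.1 p.2 * norm (G p.1 p.2))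
    rw [Fintype.sum_prod_type] at hprod
    have e1 : ∑ k, ∑ i, (b k i * norm (w i)) * (b k i * norm (G k i)) ≤
        Real.sqrt (∑ k, ∑ i, (b k i * norm (w i)) ^ 2) *
          Real.sqrt (∑ k, ∑ i, (b k i * norm (G k i)) ^ 2) := by
      convert hprod using 3 <;> rw [Fintype.sum_prod_type]
    have e2 : ∑ k, ∑ i, (b k i * norm (w i)) ^ 2 ≤ (Fintype.card m : ℝ) := by
      calc ∑ k, ∑ i, (b k i * norm (w i)) ^ 2
          ≤ ∑ k : m, ∑ i, Complex.normSq (w i) := by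
            refine Finset.sum_le_sum fun k _ => Finset.sum_le_sum fun i _ => ?_
            rw [← Complex.sq_norm]
            rcases hb01 k i with h | h <;> rw [h] <;> simp [sq_nonneg]
        _ = (Fintype.card m : ℝ) := by
            rw [Finset.sum_const, hw]; simp
    have e3 : ∑ k, ∑ i, (b k i * norm (G k i)) ^ 2 = Bd := by
      rw [hBd]
      refine Finset.sum_congr rfl fun k _ => Finset.sum_congr rfl fun i _ => ?_
      rw [← Complex.sq_norm]
      rcases hb01 k i with h | h <;> rw [h] <;> ring
    calc ∑ k, ∑ i, b k i * (norm (w i) * norm (G k i))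
        = ∑ k, ∑ i, (b k i * norm (w i)) * (b k i * norm (G k i)) := by
          exact Finset.sum_congr rfl fun k _ => Finset.sum_congr rfl fun i _ => hsplit k i
      _ ≤ Real.sqrt (∑ k, ∑ i, (b k i * norm (w i)) ^ 2) *
          Real.sqrt (∑ k, ∑ i, (b k i * norm (G k i)) ^ 2) := e1
      _ ≤ Real.sqrt (Fintype.card m) * Real.sqrt Bd := by
          rw [e3]
          exact mul_le_mul_of_nonneg_right (Real.sqrt_le_sqrt e2) (Real.sqrt_nonneg _)
  calc |a1 - a2| = norm ((a1 - a2 : ℝ) : ℂ) := habs1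
    _ ≤ ∑ i, ∑ i', ∑ k, A i i' k := htri
    _ = ∑ k, ∑ i, ∑ i', A i i' k := hrot
    _ ≤ ∑ k, ∑ i, 2 * (b k i * (norm (w i) * norm (G k i))) := hstep2
    _ = 2 * ∑ k, ∑ i, b k i * (norm (w i) * norm (G k i)) := by
        rw [Finset.mul_sum]
        exact Finset.sum_congr rfl fun k _ => by rw [Finset.mul_sum]
    _ ≤ 2 * (Real.sqrt (Fintype.card m) * Real.sqrt Bd) := by
        exact mul_le_mul_of_nonneg_left hfinal (by norm_num)
    _ = 2 * Real.sqrt (Fintype.card m) * Real.sqrt Bd := by ring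

end aux

open scoped ComplexOrder

set_option maxHeartbeats 2000000 in
theorem stmt_8 {n : ℕ} (hn : Odd n) (H : Matrix (Fin n) (Fin n) ℂ) (hH : H.IsHermitian)
    (hBJ : ∀ j : Fin n, BJOrth H (Matrix.single j j 1)) :
    ∃ i : Fin n, hH.eigenvalues i = 0 := by
  by_contra hcon
  push_neg at hcon
  have hnpos : 0 < n := hn.pos
  haveI : Nonempty (Fin n) := ⟨⟨0, hnpos⟩⟩
  set lam := hH.eigenvalues with hlam
  set eps : Fin n → ℝ := fun i => if 0 ≤ lam i then 1 else -1 with hepsdef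
  have heps : ∀ i, eps i = 1 ∨ eps i = -1 := by
    intro i; by_cases h : 0 ≤ lam i <;> simp [hepsdef, h]
  have heps_mul : ∀ i, eps i * lam i = |lam i| := by
    intro i; by_cases h : 0 ≤ lam i
    · simp [hepsdef, h, abs_of_nonneg h]
    · push_neg at h; simp [hepsdef, not_le.mpr h, abs_of_neg h]
  set δ : ℝ := Finset.univ.inf' Finset.univ_nonempty (fun i => |lam i|) with hδdef
  have hδpos : 0 < δ := by
    rw [hδdef, Finset.lt_inf'_iff]
    intro i _
    exact abs_pos.mpr (hcon i)
  have hδle : ∀ i, δ ≤ |lam i| := fun i => Finset.inf'_le _ (Finset.mem_univ i)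
  set U : Matrix (Fin n) (Fin n) ℂ := (hH.eigenvectorUnitary : Matrix (Fin n) (Fin n) ℂ) with hU
  set s : Fin n → ℝ := fun j => ∑ i, eps i * Complex.normSq (U j i) with hs
  -- main step: each s j vanishes
  have hsj : ∀ j, s j = 0 := by
    intro j
    have hstep : ∀ l : ℝ, 0 ≤ l * s j * δ + l ^ 2 * n := by
      intro l
      set B : Matrix (Fin n) (Fin n) ℂ := Matrix.single j j 1 with hB
      have hBherm : B.IsHermitian := by
        rw [Matrix.IsHermitian, hB]
        ext a bb
        simp [Matrix.conjTranspose_apply, Matrix.single, and_comm]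
      set X : Matrix (Fin n) (Fin n) ℂ := H + (l : ℂ) • B with hXdef
      have hX : X.IsHermitian := by
        rw [Matrix.IsHermitian, hXdef, Matrix.conjTranspose_add, Matrix.conjTranspose_smul,
          hH.eq, hBherm.eq, Complex.star_def, Complex.conj_ofReal]
      set μ := hX.eigenvalues with hμdef
      set eps' : Fin n → ℝ := fun k => if 0 ≤ μ k then 1 else -1 with heps'def
      have heps' : ∀ k, eps' k = 1 ∨ eps' k = -1 := by
        intro k; by_cases h : 0 ≤ μ k <;> simp [heps'def, h]
      have heps'_mul : ∀ k, eps' k * μ k = |μ k| := by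
        intro k; by_cases h : 0 ≤ μ k
        · simp [heps'def, h, abs_of_nonneg h]
        · push_neg at h; simp [heps'def, not_le.mpr h, abs_of_neg h]
      set V : Matrix (Fin n) (Fin n) ℂ := (hX.eigenvectorUnitary : Matrix (Fin n) (Fin n) ℂ)
        with hV
      set Gu : Matrix.unitaryGroup (Fin n) ℂ := star hX.eigenvectorUnitary * hH.eigenvectorUnitary
        with hGu
      set G : Matrix (Fin n) (Fin n) ℂ := star V * U with hG
      have hGcoe : G = (Gu : Matrix (Fin n) (Fin n) ℂ) := by
        rw [hG, hGu, hV, hU]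
        rfl
      have hGrow : ∀ k, ∑ i, Complex.normSq (G k i) = 1 := by
        intro k; rw [hGcoe]; exact unitary_row_sum Gu k
      have hGcol : ∀ i i', ∑ k, starRingEnd ℂ (G k i) * G k i' = if i = i' then 1 else 0 := by
        intro i i'; rw [hGcoe]; exact unitary_orth Gu i i'
      have hGcolsum : ∀ i, ∑ k, Complex.normSq (G k i) = 1 := by
        intro i; rw [hGcoe]; exact unitary_col_sum Gu i
      set w : Fin n → ℂ := fun i => starRingEnd ℂ (U j i) with hw_def
      set v : Fin n → ℂ := fun k => starRingEnd ℂ (V j k) with hv_def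
      have hw : ∑ i, Complex.normSq (w i) = 1 := by
        have := unitary_row_sum hH.eigenvectorUnitary j
        simpa [hw_def, Complex.normSq_conj, hU] using this
      have hrel : ∀ k, v k = ∑ i, G k i * w i := by
        intro k
        have hmat : G * star U = star V := by
          rw [hG, Matrix.mul_assoc, show U * star U = 1 from hH.eigenvectorUnitary.2.2,
            Matrix.mul_one]
        have := congrArg (fun M : Matrix (Fin n) (Fin n) ℂ => M k j) hmat
        simp only [Matrix.mul_apply] at this
        have hvk : v k = (star V) k j := rfl
        rw [hvk, ← this]
        refine Finset.sum_congr rfl fun i _ => rfl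
      -- the two norms sums
      have hBd0 : (0:ℝ) ≤ ∑ k, ∑ i, (if eps i = eps' k then 0 else 1) * Complex.normSq (G k i) := by
        apply Finset.sum_nonneg; intro k _; apply Finset.sum_nonneg; intro i _
        by_cases h : eps i = eps' k <;> simp [h, Complex.normSq_nonneg]
      set Bd : ℝ := ∑ k, ∑ i, (if eps i = eps' k then 0 else 1) * Complex.normSq (G k i) with hBdd
      have hD := core_ineq G w v eps eps' heps heps' hGrow hGcol hw hrel
      have hsj' : ∑ i, eps i * Complex.normSq (w i) = s j := by
        rw [hs]
        refine Finset.sum_congr rfl fun i _ => ?_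
        rw [hw_def, Complex.normSq_conj]
      have hT2' : ∑ k, eps' k * Complex.normSq (v k) = ∑ k, eps' k * Complex.normSq (V j k) := by
        refine Finset.sum_congr rfl fun k _ => ?_
        rw [hv_def, Complex.normSq_conj]
      set T2 : ℝ := ∑ k, eps' k * Complex.normSq (V j k) with hT2
      rw [hT2', hsj'] at hD
      simp only [Fintype.card_fin] at hD
      -- trace identity
      have hkey := key_trace H X hH hX j l hXdef eps'
      set T1 : ℝ := ∑ k, ∑ i, eps' k * lam i * Complex.normSq (G k i) with hT1
      have hkey' : ∑ k, |μ k| = T1 + l * T2 := by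
        rw [← Finset.sum_congr rfl fun k _ => heps'_mul k]
        exact hkey
      -- BJ inequality
      have hBJsum : ∑ i, |lam i| ≤ ∑ k, |μ k| := by
        have h1 := hBJ j l
        rw [traceNorm_hermitian_s8 hH, traceNorm_hermitian_s8 hX] at h1
        exact h1
      -- Delta bound
      have hlamsum : ∑ i, |lam i| = ∑ k, ∑ i, Complex.normSq (G k i) * |lam i| := by
        rw [Finset.sum_comm]
        refine Finset.sum_congr rfl fun i _ => ?_
        rw [← Finset.sum_mul, hGcolsum i, one_mul]
      have hDelta : δ * Bd ≤ ∑ i, |lam i| - T1 := by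
        rw [hlamsum, hT1, hBdd, Finset.mul_sum, ← Finset.sum_sub_distrib]
        refine Finset.sum_le_sum fun k _ => ?_
        rw [Finset.mul_sum, ← Finset.sum_sub_distrib]
        refine Finset.sum_le_sum fun i _ => ?_
        have hcnn : (0:ℝ) ≤ Complex.normSq (G k i) := Complex.normSq_nonneg _
        by_cases h : eps i = eps' k
        · have : eps' k * lam i = |lam i| := by rw [← h, heps_mul]
          rw [if_pos h, this]
          ring_nf
          simp [hcnn]
        · have hne : eps' k = - eps i := by
            rcases heps i with h1 | h1 <;> rcases heps' k with h2 | h2 <;> rw [h1, h2] <;>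
              first
                | exact absurd (h1.trans h2.symm) h
                | norm_num
          have : eps' k * lam i = -|lam i| := by rw [hne, ← heps_mul i]; ring
          rw [if_neg h, this]
          have := hδle i
          nlinarith
      -- assemble
      have amgm : δ * (|l| * (2 * Real.sqrt n * Real.sqrt Bd)) ≤ δ^2 * Bd + l^2 * n := by
        have h2ab := two_mul_le_add_sq (δ * Real.sqrt Bd) (|l| * Real.sqrt n)
        have e1 : (δ * Real.sqrt Bd)^2 = δ^2 * Bd := by
          rw [mul_pow, Real.sq_sqrt hBd0]
        have e2 : (|l| * Real.sqrt n)^2 = l^2 * n := by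
          rw [mul_pow, sq_abs, Real.sq_sqrt (Nat.cast_nonneg n)]
        nlinarith [Real.sqrt_nonneg Bd, Real.sqrt_nonneg (n:ℝ)]
      have habsD : l * (T2 - s j) ≤ |l| * (2 * Real.sqrt n * Real.sqrt Bd) := by
        calc l * (T2 - s j) ≤ |l * (T2 - s j)| := le_abs_self _
          _ = |l| * |T2 - s j| := abs_mul _ _
          _ ≤ |l| * (2 * Real.sqrt n * Real.sqrt Bd) :=
            mul_le_mul_of_nonneg_left hD (abs_nonneg l)
      have hchain : δ * Bd ≤ l * T2 := by linarith
      have hchain2 : δ * (δ * Bd) ≤ δ * (l * T2) :=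
        mul_le_mul_of_nonneg_left hchain (le_of_lt hδpos)
      have hexp : δ * (l * T2) = δ * (l * s j) + δ * (l * (T2 - s j)) := by ring
      have hlast : δ * (l * (T2 - s j)) ≤ δ * (|l| * (2 * Real.sqrt n * Real.sqrt Bd)) :=
        mul_le_mul_of_nonneg_left habsD (le_of_lt hδpos)
      linarith [hchain2, hlast, amgm, hexp]
    -- deduce s j = 0
    have hub : ∀ t : ℝ, 0 < t → |s j| * δ ≤ t * n := by
      intro t ht
      have h1 := hstep t
      have h2 := hstep (-t)
      have g1 : 0 ≤ s j * δ + t * n := by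
        by_contra hneg
        push_neg at hneg
        nlinarith [mul_lt_mul_of_pos_left hneg ht]
      have g2 : 0 ≤ -(s j * δ) + t * n := by
        by_contra hneg
        push_neg at hneg
        nlinarith [mul_lt_mul_of_pos_left hneg ht]
      rcases abs_cases (s j) with ⟨he, _⟩ | ⟨he, _⟩ <;> rw [he] <;> nlinarith
    have hsd : |s j| * δ ≤ 0 := by
      refine le_of_forall_pos_le_add ?_
      intro ε hε
      have ht : (0:ℝ) < ε / n := by positivity
      have := hub _ ht
      calc |s j| * δ ≤ (ε / n) * n := this
        _ = ε := by field_simp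
        _ ≤ 0 + ε := by linarith
    have habs := abs_nonneg (s j)
    have : |s j| = 0 := by nlinarith
    exact abs_eq_zero.mp this
  -- sum over j
  have hsum : ∑ i, eps i = 0 := by
    have h1 : ∑ j, s j = 0 := by
      rw [Finset.sum_congr rfl fun j _ => hsj j, Finset.sum_const, smul_zero]
    have h2 : ∑ j, s j = ∑ i, eps i := by
      rw [hs]
      rw [Finset.sum_comm]
      refine Finset.sum_congr rfl fun i _ => ?_
      rw [← Finset.mul_sum, unitary_col_sum hH.eigenvectorUnitary i, mul_one]
    rw [← h2, h1]
  -- parity contradiction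
  have hP : (n : ℝ) = 2 * (Finset.univ.filter (fun i => eps i = 1)).card := by
    have : ∑ i : Fin n, (eps i + 1) = (n : ℝ) := by
      rw [Finset.sum_add_distrib, hsum, zero_add, Finset.sum_const, Finset.card_univ]
      simp
    rw [← this]
    rw [← Finset.sum_filter_add_sum_filter_not Finset.univ (fun i => eps i = 1) (fun i => eps i + 1)]
    have ha : ∑ i ∈ Finset.univ.filter (fun i => eps i = 1), (eps i + 1) =
        2 * (Finset.univ.filter (fun i => eps i = 1)).card := by
      have h2 : ∀ i ∈ Finset.univ.filter (fun i => eps i = 1), eps i + 1 = 2 := by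
        intro i hi; rw [(Finset.mem_filter.mp hi).2]; norm_num
      rw [Finset.sum_congr rfl h2, Finset.sum_const]
      simp [mul_comm]
    have hb : ∑ i ∈ Finset.univ.filter (fun i => ¬ eps i = 1), (eps i + 1) = 0 := by
      refine Finset.sum_eq_zero fun i hi => ?_
      rcases heps i with h | h
      · exact absurd h (Finset.mem_filter.mp hi).2
      · rw [h]; ring
    rw [ha, hb, add_zero]
  have hne : n = 2 * (Finset.univ.filter (fun i => eps i = 1)).card := by exact_mod_cast hP
  have heven : Even n := ⟨(Finset.univ.filter (fun i => eps i = 1)).card, by omega⟩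
  exact (Nat.not_even_iff_odd.mpr hn) heven
end

section
/- A 2×2 Hermitian matrix H is Birkhoff–James orthogonal in the trace norm to every diagonal matrix if and only if it is Birkhoff–James orthogonal in the trace norm to both e₁e₁* and e₂e₂*. -/
open Matrix BigOperators

open scoped ComplexOrder

/-! ### Auxiliary material -/

lemma Complex.abs_ofReal (r : ℝ) : ‖(r : ℂ)‖ = |r| := by
  rw [Complex.norm_real, Real.norm_eq_abs]

noncomputable def Qf (M : Matrix (Fin 2) (Fin 2) ℂ) : ℝ :=
  ((Mᴴ * M).trace).re + 2 * ‖M.det‖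

lemma sum_eig_eq_trace {n : Type*} [Fintype n] [DecidableEq n] {A : Matrix n n ℂ}
    (hA : A.IsHermitian) : (∑ i, hA.eigenvalues i) = A.trace.re := by
  have : A.trace = (Matrix.diagonal (RCLike.ofReal ∘ hA.eigenvalues) : Matrix n n ℂ).trace := by
    rw [hA.trace_eq_sum_eigenvalues]
    simp [Matrix.trace]
  rw [this]
  simp [Matrix.trace, Matrix.diagonal]

lemma traceNorm_eq_sqrt_Qf (M : Matrix (Fin 2) (Fin 2) ℂ) :
    traceNorm M = Real.sqrt (Qf M) ∧ 0 ≤ Qf M := by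
  set hA := Matrix.isHermitian_conjTranspose_mul_self M with hAdef
  have e0 : 0 ≤ hA.eigenvalues 0 := Matrix.eigenvalues_conjTranspose_mul_self_nonneg M 0
  have e1 : 0 ≤ hA.eigenvalues 1 := Matrix.eigenvalues_conjTranspose_mul_self_nonneg M 1
  have htr : hA.eigenvalues 0 + hA.eigenvalues 1 = ((Mᴴ * M).trace).re := by
    have := sum_eig_eq_trace hA
    rwa [Fin.sum_univ_two] at this
  have hdet : hA.eigenvalues 0 * hA.eigenvalues 1 = ‖M.det‖ ^ 2 := by
    have h1 : (Mᴴ * M).det = ∏ i, (hA.eigenvalues i : ℂ) := hA.det_eq_prod_eigenvalues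
    rw [Matrix.det_mul, Matrix.det_conjTranspose, Fin.prod_univ_two] at h1
    have h2 : star M.det * M.det = ((‖M.det‖ ^ 2 : ℝ) : ℂ) := by
      rw [Complex.star_def, Complex.conj_mul']; norm_cast
    rw [h2] at h1
    exact_mod_cast h1.symm
  have habs : Real.sqrt (hA.eigenvalues 0 * hA.eigenvalues 1) = ‖M.det‖ := by
    rw [hdet, Real.sqrt_sq (norm_nonneg _)]
  have key : Qf M = (Real.sqrt (hA.eigenvalues 0) + Real.sqrt (hA.eigenvalues 1)) ^ 2 := by
    have : (Real.sqrt (hA.eigenvalues 0) + Real.sqrt (hA.eigenvalues 1)) ^ 2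
        = hA.eigenvalues 0 + hA.eigenvalues 1
          + 2 * Real.sqrt (hA.eigenvalues 0 * hA.eigenvalues 1) := by
      rw [add_sq, Real.sq_sqrt e0, Real.sq_sqrt e1, mul_assoc, ← Real.sqrt_mul e0]
      ring
    rw [this, htr, habs]; rfl
  constructor
  · rw [key, Real.sqrt_sq (by positivity), traceNorm, Fin.sum_univ_two]
  · rw [key]; positivity

lemma traceNorm_le_iff (A B : Matrix (Fin 2) (Fin 2) ℂ) :
    traceNorm A ≤ traceNorm B ↔ Qf A ≤ Qf B := by
  obtain ⟨hA1, hA2⟩ := traceNorm_eq_sqrt_Qf A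
  obtain ⟨hB1, hB2⟩ := traceNorm_eq_sqrt_Qf B
  rw [hA1, hB1, Real.sqrt_le_sqrt_iff hB2]

lemma lemC (ε t : ℝ) (hε : 0 < ε) (h : ∀ l : ℝ, |l| < ε → 0 ≤ t*l + l^2) : t = 0 := by
  by_contra ht
  rcases lt_trichotomy t 0 with h1 | h1 | h1
  · set u := min (ε/2) (-t/2) with hu
    have hu0 : 0 < u := lt_min (by linarith) (by linarith)
    have := h u (by rw [abs_of_pos hu0]; exact lt_of_le_of_lt (min_le_left _ _) (by linarith))
    have h2 : u ≤ -t/2 := min_le_right _ _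
    nlinarith
  · exact ht h1
  · set u := min (ε/2) (t/2) with hu
    have hu0 : 0 < u := lt_min (by linarith) (by linarith)
    have := h (-u) (by rw [abs_neg, abs_of_pos hu0]; exact lt_of_le_of_lt (min_le_left _ _) (by linarith))
    have h2 : u ≤ t/2 := min_le_right _ _
    nlinarith

lemma extractB (a b p : ℝ) (hp : p ≠ 0)
    (h : ∀ l : ℝ, 0 ≤ 2*a*l + l^2 + 2*(|p + l*b| - |p|)) : a * |p| + b * p = 0 := by
  have hppos : 0 < |p| := abs_pos.mpr hp
  have key : 2*a + 2*b*(p/|p|) = 0 := by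
    apply lemC (|p|/(|b|+1)) _ (by positivity)
    intro l hl
    have hlb : |l| * |b| < |p| := by
      rcases eq_or_lt_of_le (abs_nonneg b) with hb | hb
      · rw [← hb]; simpa using hppos
      · calc |l| * |b| < (|p|/(|b|+1)) * |b| := by apply mul_lt_mul_of_pos_right hl hb
          _ < |p| := by rw [div_mul_eq_mul_div, div_lt_iff₀ (by linarith)]; nlinarith
    have hub : l*b ≤ |l| * |b| := by rw [← abs_mul]; exact le_abs_self _
    have hlb2 : -(|l| * |b|) ≤ l*b := by rw [← abs_mul]; exact neg_abs_le _
    have habs : |p + l*b| - |p| = l*b*(p/|p|) := by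
      rcases lt_trichotomy p 0 with h1 | h1 | h1
      · have hs : p/|p| = -1 := by rw [abs_of_neg h1]; field_simp
        have hn : p + l*b < 0 := by
          have : |p| = -p := abs_of_neg h1
          nlinarith
        rw [hs, abs_of_neg hn, abs_of_neg h1]; ring
      · exact absurd h1 hp
      · have hs : p/|p| = 1 := by rw [abs_of_pos h1]; field_simp
        have hn : 0 < p + l*b := by
          have : |p| = p := abs_of_pos h1
          nlinarith
        rw [hs, abs_of_pos hn, abs_of_pos h1]; ring
    have h0 := h l
    rw [habs] at h0
    nlinarith [h0]
  have key2 : a + b*(p/|p|) = 0 := by linarith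
  have : (a + b*(p/|p|)) * |p| = 0 := by rw [key2]; ring
  field_simp at this
  linarith [this]

lemma extractA (a b : ℝ) (h : ∀ l : ℝ, 0 ≤ 2*a*l + l^2 + 2*|l*b|) : |a| ≤ |b| := by
  apply le_of_forall_pos_le_add
  intro ε hε
  have h1 := h ε
  have h2 := h (-ε)
  rw [abs_mul, abs_of_pos hε] at h1
  rw [abs_mul, abs_neg, abs_of_pos hε] at h2
  have key : 2 * |a| * ε ≤ ε^2 + 2*(ε * |b|) := by
    rcases le_or_gt 0 a with ha | ha
    · rw [abs_of_nonneg ha]; nlinarith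
    · rw [abs_of_neg ha]; nlinarith
  nlinarith

lemma abs_add_ge (u v : ℂ) : ‖u‖ - ‖v‖ ≤ ‖(u + v)‖ := by
  have h : ‖u‖ ≤ ‖(u + v)‖ + ‖v‖ := by
    simpa using norm_add_le (u + v) (-v)
  linarith

lemma lemD (a b p : ℝ) (hp : p ≠ 0) (hab : a * |p| + b * p = 0)
    (l : ℝ) (d₀ d₁ : ℂ) :
    0 ≤ 2*l*(a*d₀.re + b*d₁.re) + l^2*(Complex.normSq d₀ + Complex.normSq d₁)
      + 2*(‖((p:ℂ) + (l:ℂ)*((a:ℂ)*d₁ + (b:ℂ)*d₀) + (l:ℂ)^2*(d₀*d₁))‖ - |p|) := by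
  set P : ℂ := (p:ℂ) + (l:ℂ)*((a:ℂ)*d₁ + (b:ℂ)*d₀) + (l:ℂ)^2*(d₀*d₁) with hP
  have hPre : P.re = p + l*(a*d₁.re + b*d₀.re) + l^2*(d₀.re*d₁.re - d₀.im*d₁.im) := by
    simp [hP, Complex.add_re, Complex.mul_re, Complex.mul_im, Complex.ofReal_re,
      Complex.ofReal_im, pow_two]
    try ring
  have habs1 : |P.re| ≤ ‖P‖ := Complex.abs_re_le_norm P
  rw [Complex.normSq_apply, Complex.normSq_apply]
  rcases lt_trichotomy p 0 with h1 | h1 | h1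
  · rw [abs_of_neg h1] at hab ⊢
    have hba : b = a := by nlinarith
    subst hba
    have hb2 : -P.re ≤ ‖P‖ := by
      have := neg_abs_le P.re; linarith
    nlinarith [sq_nonneg (l*(d₀.re - d₁.re)), sq_nonneg (l*(d₀.im + d₁.im)), hb2, hPre]
  · exact absurd h1 hp
  · rw [abs_of_pos h1] at hab ⊢
    have hba : a = -b := by nlinarith
    subst hba
    have hb2 : P.re ≤ ‖P‖ := by
      have := le_abs_self P.re; linarith
    nlinarith [sq_nonneg (l*(d₀.re + d₁.re)), sq_nonneg (l*(d₀.im - d₁.im)), hb2, hPre]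

lemma lemE (a b ε : ℝ) (hε2 : ε^2 = 1) (hb : b = ε * a) (l : ℝ) (d₀ d₁ : ℂ) :
    0 ≤ 2*l*(a*d₀.re + b*d₁.re) + l^2*(Complex.normSq d₀ + Complex.normSq d₁)
      + 2*(‖((l:ℂ)*((a:ℂ)*d₁ + (b:ℂ)*d₀) + (l:ℂ)^2*(d₀*d₁))‖) := by
  set w : ℂ := d₀ + (ε:ℂ)*d₁ with hw
  have hεc : (ε:ℂ)^2 = 1 := by
    have := congrArg (Complex.ofReal) hε2; push_cast at this; exact this
  have hεabs : |ε| = 1 := by nlinarith [sq_abs ε, abs_nonneg ε]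
  have he : (a:ℂ)*d₁ + (b:ℂ)*d₀ = (a:ℂ)*(ε:ℂ)*w := by
    rw [hb, hw]; push_cast; linear_combination (-(a:ℂ)*d₁) * hεc
  set W : ℝ := ‖w‖ with hW
  set A0 : ℝ := ‖d₀‖ with hA0
  set A1 : ℝ := ‖d₁‖ with hA1
  have habsprod : ‖((l:ℂ)*((a:ℂ)*(ε:ℂ)*w))‖ = |l| * |a| * W := by
    rw [norm_mul, norm_mul, norm_mul, Complex.abs_ofReal, Complex.abs_ofReal,
      Complex.abs_ofReal, hεabs]
    ring
  have habsprod2 : ‖((l:ℂ)^2*(d₀*d₁))‖ = l^2 * (A0*A1) := by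
    rw [norm_mul, norm_mul, norm_pow, Complex.abs_ofReal, sq_abs]
  have hlow : |l| * |a| * W - l^2 * (A0*A1) ≤
      ‖((l:ℂ)*((a:ℂ)*d₁ + (b:ℂ)*d₀) + (l:ℂ)^2*(d₀*d₁))‖ := by
    rw [he, ← habsprod, ← habsprod2]
    exact abs_add_ge _ _
  have hwre : w.re = d₀.re + ε*d₁.re := by
    simp [hw, Complex.add_re, Complex.mul_re]
  have hre : |w.re| ≤ W := Complex.abs_re_le_norm w
  have hlin : -(2 * |l| * |a| * W) ≤ 2*l*(a*d₀.re + b*d₁.re) := by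
    have h1 : 2*l*(a*d₀.re + b*d₁.re) = 2*(l*a)*w.re := by
      rw [hwre, hb]; ring
    have h2 : |2*(l*a)*w.re| ≤ 2 * |l| * |a| * W := by
      rw [abs_mul, abs_mul, abs_mul]
      simp only [Nat.abs_ofNat]
      have h3 : |l| * |a| * |w.re| ≤ |l| * |a| * W :=
        mul_le_mul_of_nonneg_left hre (by positivity)
      linarith
    have := neg_abs_le (2*(l*a)*w.re)
    linarith
  have hn0 : Complex.normSq d₀ = A0^2 := Complex.normSq_eq_norm_sq d₀
  have hn1 : Complex.normSq d₁ = A1^2 := Complex.normSq_eq_norm_sq d₁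
  have hamgm : 2*(A0*A1) ≤ A0^2 + A1^2 := by nlinarith [sq_nonneg (A0 - A1)]
  nlinarith [sq_nonneg l, sq_abs l, sq_nonneg (l*(A0-A1))]

lemma Qf_entry (M : Matrix (Fin 2) (Fin 2) ℂ) :
    Qf M = Complex.normSq (M 0 0) + Complex.normSq (M 0 1) + Complex.normSq (M 1 0)
      + Complex.normSq (M 1 1) + 2 * ‖(M 0 0 * M 1 1 - M 0 1 * M 1 0)‖ := by
  have h : (Mᴴ * M).trace = ∑ i, ∑ j, (starRingEnd ℂ) (M j i) * M j i := by
    simp [Matrix.trace, Matrix.mul_apply, Matrix.conjTranspose_apply]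
  rw [Qf, h, Matrix.det_fin_two]
  simp [Fin.sum_univ_two, Complex.add_re, Complex.normSq_apply]
  ring

lemma normSq_aux (a l : ℝ) (d : ℂ) :
    Complex.normSq ((a:ℂ) + (l:ℂ)*d) = a^2 + 2*l*a*d.re + l^2*Complex.normSq d := by
  simp [Complex.normSq_apply, Complex.add_re, Complex.add_im, Complex.mul_re, Complex.mul_im]
  ring

lemma BJ_iff (H : Matrix (Fin 2) (Fin 2) ℂ) (hH : H.IsHermitian)
    (D : Matrix (Fin 2) (Fin 2) ℂ) (hD : D.IsDiag) :
    BJOrth H D ↔ ∀ l : ℝ,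
      0 ≤ 2*l*(((H 0 0).re)*(D 0 0).re + ((H 1 1).re)*(D 1 1).re)
        + l^2*(Complex.normSq (D 0 0) + Complex.normSq (D 1 1))
        + 2*(‖(((((H 0 0).re*(H 1 1).re - Complex.normSq (H 0 1) : ℝ)) : ℂ)
              + (l:ℂ)*(((H 0 0).re : ℂ)*(D 1 1) + ((H 1 1).re : ℂ)*(D 0 0))
              + (l:ℂ)^2*((D 0 0)*(D 1 1)))‖
            - |(H 0 0).re*(H 1 1).re - Complex.normSq (H 0 1)|) := by
  set a := (H 0 0).re
  set b := (H 1 1).re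
  set c := H 0 1 with hc
  have hH00 : H 0 0 = (a : ℂ) := by
    have := congrFun (congrFun hH 0) 0
    rw [Matrix.conjTranspose_apply] at this
    exact ((Complex.conj_eq_iff_re.mp this)).symm
  have hH11 : H 1 1 = (b : ℂ) := by
    have := congrFun (congrFun hH 1) 1
    rw [Matrix.conjTranspose_apply] at this
    exact ((Complex.conj_eq_iff_re.mp this)).symm
  have hH10 : H 1 0 = (starRingEnd ℂ) c := by
    have := congrFun (congrFun hH 1) 0
    rw [Matrix.conjTranspose_apply] at this
    exact this.symm
  have hD01 : D 0 1 = 0 := hD (by decide)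
  have hD10 : D 1 0 = 0 := hD (by decide)
  have hcc : c * (starRingEnd ℂ) c = (Complex.normSq c : ℂ) := Complex.mul_conj c
  unfold BJOrth
  apply forall_congr'
  intro l
  rw [traceNorm_le_iff]
  have hent : ∀ i j, (H + (l:ℂ) • D) i j = H i j + (l:ℂ) * D i j := by
    intro i j; simp [Matrix.add_apply, Matrix.smul_apply, smul_eq_mul]
  rw [Qf_entry, Qf_entry]
  rw [hent, hent, hent, hent, hH00, hH11, hH10, hD01, hD10]
  simp only [mul_zero, add_zero]
  rw [← hc]
  have hdet : ((a:ℂ) + (l:ℂ)*(D 0 0)) * ((b:ℂ) + (l:ℂ)*(D 1 1)) - c * (starRingEnd ℂ) c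
      = (((a*b - Complex.normSq c : ℝ)):ℂ)
        + (l:ℂ)*((a:ℂ)*(D 1 1) + (b:ℂ)*(D 0 0)) + (l:ℂ)^2*((D 0 0)*(D 1 1)) := by
    rw [hcc]; push_cast; ring
  have hdet0 : (a:ℂ) * (b:ℂ) - c * (starRingEnd ℂ) c = (((a*b - Complex.normSq c : ℝ)):ℂ) := by
    rw [hcc]; push_cast; ring
  rw [hdet, hdet0, normSq_aux, normSq_aux]
  have habs : ‖((((a*b - Complex.normSq c : ℝ)):ℂ))‖ = |a*b - Complex.normSq c| :=
    Complex.abs_ofReal _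
  have hnsa : Complex.normSq ((a:ℂ)) = a^2 := by simp [Complex.normSq_apply]; ring
  have hnsb : Complex.normSq ((b:ℂ)) = b^2 := by simp [Complex.normSq_apply]; ring
  rw [habs, hnsa, hnsb]
  constructor <;> intro h <;> linarith

lemma isDiag_std (i : Fin 2) : (Matrix.single i i (1:ℂ)).IsDiag := by
  intro x y hxy
  apply Matrix.single_apply_of_ne
  rintro ⟨rfl, rfl⟩
  exact hxy rfl

theorem stmt_9 (H : Matrix (Fin 2) (Fin 2) ℂ) (hH : H.IsHermitian) :
    (∀ D : Matrix (Fin 2) (Fin 2) ℂ, D.IsDiag → BJOrth H D) ↔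
      (BJOrth H (Matrix.single 0 0 1) ∧ BJOrth H (Matrix.single 1 1 1)) := by
  constructor
  · intro h
    exact ⟨h _ (isDiag_std 0), h _ (isDiag_std 1)⟩
  · rintro ⟨h0, h1⟩ D hD
    rw [BJ_iff H hH _ (isDiag_std 0)] at h0
    rw [BJ_iff H hH _ (isDiag_std 1)] at h1
    rw [BJ_iff H hH D hD]
    set a := (H 0 0).re with ha
    set b := (H 1 1).re with hb
    set k := Complex.normSq (H 0 1) with hk
    have e000 : (Matrix.single (0:Fin 2) (0:Fin 2) (1:ℂ)) 0 0 = 1 := by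
      simp [Matrix.single]
    have e011 : (Matrix.single (0:Fin 2) (0:Fin 2) (1:ℂ)) 1 1 = 0 := by
      simp [Matrix.single]
    have e111 : (Matrix.single (1:Fin 2) (1:Fin 2) (1:ℂ)) 1 1 = 1 := by
      simp [Matrix.single]
    have e100 : (Matrix.single (1:Fin 2) (1:Fin 2) (1:ℂ)) 0 0 = 0 := by
      simp [Matrix.single]
    simp only [e000, e011] at h0
    simp only [e111, e100] at h1
    have h0' : ∀ l : ℝ, 0 ≤ 2*a*l + l^2 + 2*(|a*b - k + l*b| - |a*b - k|) := by
      intro l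
      have hthis := h0 l
      have heq : (((a*b - k : ℝ)):ℂ) + (l:ℂ)*((a:ℂ)*0 + (b:ℂ)*1) + (l:ℂ)^2*(1*0)
          = (((a*b - k + l*b : ℝ)):ℂ) := by push_cast; ring
      rw [heq, Complex.abs_ofReal] at hthis
      simp only [Complex.one_re, Complex.zero_re, Complex.normSq_one,
        Complex.normSq_zero] at hthis
      linarith
    have h1' : ∀ l : ℝ, 0 ≤ 2*b*l + l^2 + 2*(|a*b - k + l*a| - |a*b - k|) := by
      intro l
      have hthis := h1 l
      have heq : (((a*b - k : ℝ)):ℂ) + (l:ℂ)*((a:ℂ)*1 + (b:ℂ)*0) + (l:ℂ)^2*(0*1)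
          = (((a*b - k + l*a : ℝ)):ℂ) := by push_cast; ring
      rw [heq, Complex.abs_ofReal] at hthis
      simp only [Complex.one_re, Complex.zero_re, Complex.normSq_one,
        Complex.normSq_zero] at hthis
      linarith
    intro l
    rcases eq_or_ne (a*b - k) 0 with hp | hp
    · -- degenerate case
      have h0'' : ∀ l : ℝ, 0 ≤ 2*a*l + l^2 + 2*|l*b| := by
        intro l'; have := h0' l'; rw [hp] at this; simpa using this
      have h1'' : ∀ l : ℝ, 0 ≤ 2*b*l + l^2 + 2*|l*a| := by
        intro l'; have := h1' l'; rw [hp] at this; simpa using this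
      have hba : |b| = |a| := le_antisymm (extractA b a h1'') (extractA a b h0'')
      rcases abs_eq_abs.mp hba with hcase | hcase
      · have := lemE a b 1 (by norm_num) (by rw [hcase]; ring) l (D 0 0) (D 1 1)
        rw [hp] at *
        simpa using this
      · have := lemE a b (-1) (by norm_num) (by rw [hcase]; ring) l (D 0 0) (D 1 1)
        rw [hp] at *
        simpa using this
    · -- nondegenerate case
      have hab := extractB a b (a*b - k) hp h0'
      exact lemD a b (a*b - k) hp hab l (D 0 0) (D 1 1)
end

section
/- Let H be an n×n Hermitian matrix. If H has a polar decomposition H = UP in which U is a Hermitian unitary with all diagonal entries equal to 0 and P is positive semidefinite, then H is Birkhoff–James orthogonal in the trace norm to every diagonal matrix. -/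
open Matrix BigOperators

lemma eigenvalues_congr {m : Type*} [Fintype m] [DecidableEq m] {A B : Matrix m m ℂ}
    (hA : A.IsHermitian) (hB : B.IsHermitian) (h : A = B) :
    hA.eigenvalues = hB.eigenvalues := by subst h; rfl

lemma traceNorm_unitary_mul {n : ℕ} (W A : Matrix (Fin n) (Fin n) ℂ)
    (hW : star W * W = 1) : traceNorm (W * A) = traceNorm A := by
  have h : (W * A)ᴴ * (W * A) = Aᴴ * A := by
    rw [conjTranspose_mul, mul_assoc, ← mul_assoc Wᴴ, ← star_eq_conjTranspose W, hW, one_mul]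
  unfold traceNorm
  rw [eigenvalues_congr (Matrix.isHermitian_conjTranspose_mul_self (W * A))
    (Matrix.isHermitian_conjTranspose_mul_self A) h]

lemma re_trace_le_traceNorm {n : ℕ} (X : Matrix (Fin n) (Fin n) ℂ) :
    (X.trace).re ≤ traceNorm X := by
  have hM := Matrix.isHermitian_conjTranspose_mul_self X
  obtain ⟨V, hVmem⟩ : ∃ V : Matrix (Fin n) (Fin n) ℂ, V ∈ Matrix.unitaryGroup (Fin n) ℂ ∧
      Vᴴ * (Xᴴ * X) * V = diagonal (RCLike.ofReal ∘ hM.eigenvalues) :=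
    ⟨hM.eigenvectorUnitary, hM.eigenvectorUnitary.2, by
      simpa [star_eq_conjTranspose, Unitary.conjStarAlgAut_star_apply] using
        hM.conjStarAlgAut_star_eigenvectorUnitary⟩
  obtain ⟨hVu, hVdiag⟩ := hVmem
  have hVV : V * Vᴴ = 1 := by
    have := Matrix.mem_unitaryGroup_iff.mp hVu
    rwa [star_eq_conjTranspose] at this
  have key : ∀ Z : Matrix (Fin n) (Fin n) ℂ, V * (Vᴴ * Z) = Z := fun Z => by
    rw [← mul_assoc, hVV, one_mul]
  set Y : Matrix (Fin n) (Fin n) ℂ := Vᴴ * X * V with hYdef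
  have htr : Y.trace = X.trace := by
    rw [hYdef, trace_mul_cycle, hVV, one_mul]
  have hdiag : Yᴴ * Y = diagonal (RCLike.ofReal ∘ hM.eigenvalues) := by
    calc Yᴴ * Y = Vᴴ * (Xᴴ * (V * (Vᴴ * (X * V)))) := by
          rw [hYdef]
          simp only [conjTranspose_mul, conjTranspose_conjTranspose, mul_assoc]
      _ = Vᴴ * (Xᴴ * (X * V)) := by rw [key]
      _ = Vᴴ * (Xᴴ * X) * V := by simp only [mul_assoc]
      _ = diagonal (RCLike.ofReal ∘ hM.eigenvalues) := hVdiag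
  have hbound : ∀ i, ‖Y i i‖ ≤ Real.sqrt (hM.eigenvalues i) := by
    intro i
    have h1 : (Yᴴ * Y) i i = (hM.eigenvalues i : ℂ) := by
      rw [hdiag]; simp
    have h2 : ∑ j, Complex.normSq (Y j i) = hM.eigenvalues i := by
      have h1' := congrArg Complex.re h1
      rw [Matrix.mul_apply] at h1'
      simp only [conjTranspose_apply, Complex.ofReal_re] at h1'
      rw [← h1', Complex.re_sum]
      refine Finset.sum_congr rfl fun j _ => ?_
      simp [mul_comm, Complex.star_def, Complex.mul_conj]
    have h3 : Complex.normSq (Y i i) ≤ hM.eigenvalues i := h2 ▸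
      Finset.single_le_sum (fun j _ => Complex.normSq_nonneg (Y j i)) (Finset.mem_univ i)
    rw [Complex.norm_def]
    exact Real.sqrt_le_sqrt h3
  calc X.trace.re = Y.trace.re := by rw [htr]
    _ = ∑ i, (Y i i).re := by rw [Matrix.trace, Complex.re_sum]; rfl
    _ ≤ ∑ i, ‖Y i i‖ := Finset.sum_le_sum fun i _ => Complex.re_le_norm _
    _ ≤ ∑ i, Real.sqrt (hM.eigenvalues i) := Finset.sum_le_sum fun i _ => hbound i
    _ = traceNorm X := rfl

open scoped ComplexOrder

open scoped MatrixOrder in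
lemma trace_posSemidef_sqrt {n : ℕ} {M : Matrix (Fin n) (Fin n) ℂ} (hM : M.PosSemidef) :
    (CFC.sqrt M).trace = ∑ i, (Real.sqrt (hM.1.eigenvalues i) : ℂ) := by
  rw [CFC.sqrt_eq_cfc, cfc_nnreal_eq_real _ M, hM.1.cfc_eq, IsHermitian.cfc,
    Unitary.conjStarAlgAut_apply]
  rw [trace_mul_cycle]
  have : (star (hM.1.eigenvectorUnitary : Matrix (Fin n) (Fin n) ℂ)) *
      (hM.1.eigenvectorUnitary : Matrix (Fin n) (Fin n) ℂ) = 1 :=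
    Matrix.mem_unitaryGroup_iff'.mp hM.1.eigenvectorUnitary.2
  rw [this, one_mul, trace_diagonal]
  refine Finset.sum_congr rfl fun i _ => ?_
  simp [max_eq_left (hM.eigenvalues_nonneg i)]

open scoped MatrixOrder in
theorem stmt_10 {n : ℕ} (H U P : Matrix (Fin n) (Fin n) ℂ) (hH : H.IsHermitian)
    (hpolar : H = U * P) (hU : U.IsHermitian) (hUunit : U ∈ Matrix.unitaryGroup (Fin n) ℂ)
    (hUdiag : ∀ j : Fin n, U j j = 0) (hP : P.PosSemidef) :
    ∀ D : Matrix (Fin n) (Fin n) ℂ, D.IsDiag → BJOrth H D := by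
  intro D hD l
  have hstar : star U * U = 1 := Matrix.mem_unitaryGroup_iff'.mp hUunit
  have hUU : U * U = 1 := by rwa [star_eq_conjTranspose, hU.eq] at hstar
  -- traceNorm H = re (trace P)
  have hQ : (Hᴴ * H).PosSemidef := Matrix.posSemidef_conjTranspose_mul_self H
  have hsq : P ^ 2 = Hᴴ * H := by
    rw [hpolar, conjTranspose_mul, mul_assoc, ← mul_assoc Uᴴ, ← star_eq_conjTranspose U,
      hstar, one_mul, hP.1, pow_two]
  have hPsqrt : P = CFC.sqrt (Hᴴ * H) :=
    (CFC.sqrt_unique (by rw [← pow_two]; exact hsq) hP.nonneg).symm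
  have htrP : P.trace = ∑ i, (Real.sqrt (hQ.1.eigenvalues i) : ℂ) := by
    rw [hPsqrt]; exact trace_posSemidef_sqrt hQ
  have heig : hQ.1.eigenvalues = (Matrix.isHermitian_conjTranspose_mul_self H).eigenvalues := rfl
  have hTN : traceNorm H = P.trace.re := by
    rw [htrP, Complex.re_sum]
    unfold traceNorm
    rw [← heig]
    refine Finset.sum_congr rfl fun i _ => ?_
    simp
  -- trace (U * (H + l•D)) = trace P
  have hUD : (U * D).trace = 0 := by
    rw [Matrix.trace]
    refine Finset.sum_eq_zero fun i _ => ?_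
    show (U * D) i i = 0
    rw [Matrix.mul_apply]
    refine Finset.sum_eq_zero fun j _ => ?_
    rcases eq_or_ne j i with rfl | hj
    · rw [hUdiag j, zero_mul]
    · rw [hD hj, mul_zero]
  have hUH : U * H = P := by rw [hpolar, ← mul_assoc, hUU, one_mul]
  have htr : (U * (H + (l : ℂ) • D)).trace = P.trace := by
    rw [mul_add, trace_add, Matrix.mul_smul, trace_smul, hUD, smul_zero, add_zero, hUH]
  calc traceNorm H = P.trace.re := hTN
    _ = ((U * (H + (l : ℂ) • D)).trace).re := by rw [htr]
    _ ≤ traceNorm (U * (H + (l : ℂ) • D)) := re_trace_le_traceNorm _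
    _ = traceNorm (H + (l : ℂ) • D) := traceNorm_unitary_mul _ _ hstar
end

section
/- Let P be an n×n orthogonal projection and 1 ≤ k ≤ n. Denote by ‖P‖₍ₖ₎ the maximum operator norm of a k×k principal submatrix of P, and by ‖P‖₍₁₎ its maximal diagonal entry. Then ‖P‖₍ₖ₎ ≥ ‖P‖₍₁₎ + ((k−1)/(n−1))(1 − ‖P‖₍₁₎) when n ≥ 2. -/
open Matrix BigOperators

open scoped ComplexOrder

section Helpers

lemma dot_self' {m : Type*} [Fintype m] (x : m → ℂ) : star x ⬝ᵥ x = ((∑ i, ‖x i‖ ^ 2 : ℝ) : ℂ) := by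
  simp only [dotProduct, Pi.star_apply, RCLike.star_def, Complex.conj_mul', Complex.ofReal_sum]
  norm_cast

lemma trace_eq' {m : Type*} [Fintype m] [DecidableEq m] {H : Matrix m m ℂ} (hH : H.IsHermitian) :
    H.trace = ∑ i, (hH.eigenvalues i : ℂ) := by
  conv_lhs => rw [hH.spectral_theorem, Unitary.conjStarAlgAut_apply]
  rw [Matrix.trace_mul_cycle]
  rw [show (star (hH.eigenvectorUnitary : Matrix m m ℂ)) * (hH.eigenvectorUnitary : Matrix m m ℂ)
      = 1 from Unitary.coe_star_mul_self _, one_mul, Matrix.trace_diagonal]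
  rfl

lemma cauchy_schwarz' {m : Type*} [Fintype m] (x y : m → ℂ) :
    ‖star x ⬝ᵥ y‖ ≤ Real.sqrt (∑ i, ‖x i‖ ^ 2) * Real.sqrt (∑ i, ‖y i‖ ^ 2) := by
  have h := norm_inner_le_norm (𝕜 := ℂ) ((WithLp.equiv 2 (m → ℂ)).symm x)
    ((WithLp.equiv 2 (m → ℂ)).symm y)
  rw [show inner ℂ ((WithLp.equiv 2 (m → ℂ)).symm x) ((WithLp.equiv 2 (m → ℂ)).symm y) = star x ⬝ᵥ y from (EuclideanSpace.inner_toLp_toLp x y).trans (dotProduct_comm _ _)] at h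
  rw [EuclideanSpace.norm_eq, EuclideanSpace.norm_eq] at h
  simpa using h

lemma quad_form_le' {m : Type*} [Fintype m] [DecidableEq m]
    {H : Matrix m m ℂ} (hH : H.IsHermitian) (x : m → ℂ) :
    (star x ⬝ᵥ (H *ᵥ x)).re ≤ (⨆ i, hH.eigenvalues i) * ∑ i, ‖x i‖ ^ 2 := by
  classical
  cases isEmpty_or_nonempty m with
  | inl h => simp [dotProduct]
  | inr h =>
  set U : Matrix m m ℂ := (hH.eigenvectorUnitary : Matrix m m ℂ) with hU
  set y : m → ℂ := (star U) *ᵥ x with hy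
  have hsy : star y = star x ᵥ* U := by
    rw [hy, star_mulVec, star_eq_conjTranspose, conjTranspose_conjTranspose]
  have key : star x ⬝ᵥ (H *ᵥ x)
      = star y ⬝ᵥ (Matrix.diagonal (RCLike.ofReal ∘ hH.eigenvalues) *ᵥ y) := by
    conv_lhs => rw [hH.spectral_theorem, Unitary.conjStarAlgAut_apply]
    rw [← hU, ← mulVec_mulVec, ← mulVec_mulVec, dotProduct_mulVec, ← hsy, hy]
  have hyx : ∑ i, ‖y i‖ ^ 2 = ∑ i, ‖x i‖ ^ 2 := by
    have heq : star y ⬝ᵥ y = star x ⬝ᵥ x := by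
      rw [hsy, hy, ← dotProduct_mulVec, mulVec_mulVec]
      rw [show U * star U = 1 from Unitary.coe_mul_star_self _, one_mulVec]
    have h1 := dot_self' y
    have h2 := dot_self' x
    rw [heq, h2] at h1
    exact_mod_cast h1.symm
  rw [key, ← hyx]
  have expand : (star y ⬝ᵥ (Matrix.diagonal (RCLike.ofReal ∘ hH.eigenvalues) *ᵥ y)).re
      = ∑ i, hH.eigenvalues i * ‖y i‖ ^ 2 := by
    rw [show Matrix.diagonal (RCLike.ofReal ∘ hH.eigenvalues) *ᵥ y
        = fun i => (hH.eigenvalues i : ℂ) * y i by ext i; simp [mulVec_diagonal]]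
    simp only [dotProduct, Pi.star_apply, RCLike.star_def, Complex.re_sum]
    congr 1; ext i
    have hcomm : (starRingEnd ℂ) (y i) * ((hH.eigenvalues i : ℂ) * y i)
        = (hH.eigenvalues i : ℂ) * ((starRingEnd ℂ) (y i) * y i) := by ring
    rw [hcomm, Complex.conj_mul']
    norm_cast
  rw [expand, Finset.mul_sum]
  apply Finset.sum_le_sum
  intro i _
  exact mul_le_mul_of_nonneg_right
    (le_ciSup (Set.Finite.bddAbove (Set.finite_range _)) i) (sq_nonneg _)

lemma opNorm_nonneg' {m : Type*} [Fintype m] [DecidableEq m] (A : Matrix m m ℂ) :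
    0 ≤ opNorm A :=
  by unfold opNorm; exact Real.iSup_nonneg fun _ => Real.sqrt_nonneg _

lemma re_quad_le_opNorm {m : Type*} [Fintype m] [DecidableEq m] [Nonempty m]
    (A : Matrix m m ℂ) (x : m → ℂ) :
    (star x ⬝ᵥ (A *ᵥ x)).re ≤ opNorm A * ∑ i, ‖x i‖ ^ 2 := by
  classical
  set S := ∑ i, ‖x i‖ ^ 2 with hSdef
  have hS : 0 ≤ S := Finset.sum_nonneg fun _ _ => sq_nonneg _
  have hON := opNorm_nonneg' A
  have hCS : ‖star x ⬝ᵥ (A *ᵥ x)‖ ≤ Real.sqrt S * Real.sqrt (∑ i, ‖(A *ᵥ x) i‖ ^ 2) :=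
    cauchy_schwarz' x (A *ᵥ x)
  have h3 : ∑ i, ‖(A *ᵥ x) i‖ ^ 2 = (star x ⬝ᵥ ((Aᴴ * A) *ᵥ x)).re := by
    have h := dot_self' (A *ᵥ x)
    rw [star_mulVec, ← dotProduct_mulVec, mulVec_mulVec] at h
    rw [h]
    simp [← Complex.ofReal_pow]
  have h5 : (⨆ i, (Matrix.isHermitian_conjTranspose_mul_self A).eigenvalues i) ≤ opNorm A ^ 2 := by
    apply ciSup_le
    intro i
    have h1 : Real.sqrt ((Matrix.isHermitian_conjTranspose_mul_self A).eigenvalues i) ≤ opNorm A :=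
      le_ciSup (f := fun j => Real.sqrt ((Matrix.isHermitian_conjTranspose_mul_self A).eigenvalues j))
        (Set.Finite.bddAbove (Set.finite_range _)) i
    have h2 := Matrix.eigenvalues_conjTranspose_mul_self_nonneg A i
    nlinarith [Real.sq_sqrt h2,
      Real.sqrt_nonneg ((Matrix.isHermitian_conjTranspose_mul_self A).eigenvalues i)]
  have h4 : ∑ i, ‖(A *ᵥ x) i‖ ^ 2 ≤ opNorm A ^ 2 * S := by
    rw [h3]
    calc (star x ⬝ᵥ ((Aᴴ * A) *ᵥ x)).re
        ≤ (⨆ i, (Matrix.isHermitian_conjTranspose_mul_self A).eigenvalues i) * S :=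
        quad_form_le' (Matrix.isHermitian_conjTranspose_mul_self A) x
      _ ≤ opNorm A ^ 2 * S := mul_le_mul_of_nonneg_right h5 hS
  calc (star x ⬝ᵥ (A *ᵥ x)).re ≤ ‖star x ⬝ᵥ (A *ᵥ x)‖ := Complex.re_le_norm _
    _ ≤ Real.sqrt S * Real.sqrt (∑ i, ‖(A *ᵥ x) i‖ ^ 2) := hCS
    _ ≤ Real.sqrt S * Real.sqrt (opNorm A ^ 2 * S) :=
        mul_le_mul_of_nonneg_left (Real.sqrt_le_sqrt h4) (Real.sqrt_nonneg _)
    _ = opNorm A * S := by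
        rw [Real.sqrt_mul (sq_nonneg _), Real.sqrt_sq hON]
        rw [mul_comm (opNorm A), ← mul_assoc, Real.mul_self_sqrt hS, mul_comm]

lemma opNorm_card_one_le {m : Type*} [Fintype m] [DecidableEq m] (A : Matrix m m ℂ) (a : m)
    (huniq : ∀ b : m, b = a) : opNorm A ≤ ‖A a a‖ := by
  have hnn := Matrix.eigenvalues_conjTranspose_mul_self_nonneg A
  have h2 : (Aᴴ * A).trace = ((‖A a a‖ : ℂ) ^ 2) := by
    rw [Matrix.trace]
    rw [Fintype.sum_eq_single a (fun b hb => absurd (huniq b) hb)]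
    rw [Matrix.diag_apply, Matrix.mul_apply,
      Fintype.sum_eq_single a (fun b hb => absurd (huniq b) hb), Matrix.conjTranspose_apply,
      RCLike.star_def, Complex.conj_mul']
  have htr : ∑ j, (Matrix.isHermitian_conjTranspose_mul_self A).eigenvalues j = ‖A a a‖ ^ 2 := by
    have h := trace_eq' (Matrix.isHermitian_conjTranspose_mul_self A)
    rw [h2] at h
    have := congrArg Complex.re h.symm
    simpa [Complex.re_sum, ← Complex.ofReal_pow] using this
  haveI : Nonempty m := ⟨a⟩
  apply ciSup_le
  intro i
  have hle : (Matrix.isHermitian_conjTranspose_mul_self A).eigenvalues i ≤ ‖A a a‖ ^ 2 := by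
    rw [← htr]
    exact Finset.single_le_sum (fun j _ => hnn j) (Finset.mem_univ i)
  calc Real.sqrt _ ≤ Real.sqrt (‖A a a‖ ^ 2) := Real.sqrt_le_sqrt hle
    _ = ‖A a a‖ := Real.sqrt_sq (norm_nonneg _)

lemma select_lemma {ι : Type*} [DecidableEq ι] :
    ∀ (m : ℕ) (T : Finset ι) (f : ι → ℝ), (∀ i ∈ T, 0 ≤ f i) → m ≤ T.card →
      ∃ s, s ⊆ T ∧ s.card = m ∧ (m : ℝ) * ∑ i ∈ T, f i ≤ (T.card : ℝ) * ∑ i ∈ s, f i := by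
  intro m
  induction m with
  | zero => exact fun T f h0 hm => ⟨∅, Finset.empty_subset _, rfl, by simp⟩
  | succ m ih =>
    intro T f h0 hm
    have hTne : T.Nonempty := Finset.card_pos.mp (lt_of_lt_of_le (Nat.succ_pos m) hm)
    obtain ⟨a, haT, hamax⟩ := Finset.exists_max_image T f hTne
    have hcard : (T.erase a).card = T.card - 1 := Finset.card_erase_of_mem haT
    have hsub : m ≤ (T.erase a).card := by rw [hcard]; omega
    obtain ⟨s', hs'sub, hs'card, hs'⟩ := ih (T.erase a) f
      (fun i hi => h0 i (Finset.mem_of_mem_erase hi)) hsub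
    have has' : a ∉ s' := fun h => Finset.notMem_erase a T (hs'sub h)
    refine ⟨insert a s', Finset.insert_subset haT (hs'sub.trans (Finset.erase_subset _ _)), ?_, ?_⟩
    · rw [Finset.card_insert_of_notMem has', hs'card]
    · have hN1 : 1 ≤ T.card := le_trans (by omega) hm
      have hTfa : ∑ i ∈ T, f i ≤ (T.card : ℝ) * f a := by
        calc ∑ i ∈ T, f i ≤ ∑ _i ∈ T, f a := Finset.sum_le_sum (fun i hi => hamax i hi)
          _ = (T.card : ℝ) * f a := by rw [Finset.sum_const, nsmul_eq_mul]
      have herase : ∑ i ∈ T.erase a, f i = ∑ i ∈ T, f i - f a := by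
        rw [← Finset.sum_erase_add T f haT]; ring
      have hsum : ∑ i ∈ insert a s', f i = f a + ∑ i ∈ s', f i := Finset.sum_insert has'
      have hNcast : ((T.erase a).card : ℝ) = (T.card : ℝ) - 1 := by
        rw [hcard, Nat.cast_sub hN1]; norm_num
      rw [hsum]
      rw [hNcast, herase] at hs'
      have hs'0 : 0 ≤ ∑ i ∈ s', f i :=
        Finset.sum_nonneg fun i hi => h0 i (Finset.mem_of_mem_erase (hs'sub hi))
      have hfa0 : 0 ≤ f a := h0 a haT
      by_cases hone : T.card = 1
      · have hm0 : m = 0 := by omega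
        have hs'e : s' = ∅ := Finset.card_eq_zero.mp (by rw [hs'card, hm0])
        have hTa : T = {a} := by
          obtain ⟨b, hb⟩ := Finset.card_eq_one.mp hone
          rw [hb] at haT ⊢
          rw [Finset.mem_singleton] at haT
          rw [haT]
        subst hm0
        rw [hs'e, hTa]
        simp
      · have hN2 : 2 ≤ T.card := by omega
        have hNm : (m : ℝ) + 1 ≤ (T.card : ℝ) := by exact_mod_cast hm
        have h1 : 0 ≤ (T.card : ℝ) - 1 - m := by linarith
        have h2 : 0 ≤ (T.card : ℝ) * f a - ∑ i ∈ T, f i := by linarith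
        have hpos : (0:ℝ) < (T.card : ℝ) - 1 := by
          have : (2:ℝ) ≤ (T.card : ℝ) := by exact_mod_cast hN2
          linarith
        push_cast
        nlinarith [mul_nonneg h1 h2, hs', hs'0, hfa0, mul_nonneg (le_of_lt hpos) hs'0]

lemma final_arith {c d t S : ℝ} (h1 : c ≤ d) (h2 : d + t*(1-d) ≤ S) (h4 : t ≤ 1) :
    c + t * (1 - c) ≤ S := by
  nlinarith [mul_nonneg (sub_nonneg.mpr h1) (sub_nonneg.mpr h4)]

end Helpers

theorem stmt_13 {n k : ℕ} (P : Matrix (Fin n) (Fin n) ℂ)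
    (hP : P.IsHermitian) (hPproj : P * P = P) (hPne : P ≠ 0)
    (hn : 2 ≤ n) (hk : 1 ≤ k) (hkn : k ≤ n) :
    sSup {r : ℝ | ∃ s : Finset (Fin n), s.card = 1 ∧ r = opNorm (principalSub P s)} +
        (((k : ℝ) - 1) / ((n : ℝ) - 1)) *
          (1 - sSup {r : ℝ | ∃ s : Finset (Fin n), s.card = 1 ∧ r = opNorm (principalSub P s)}) ≤
      sSup {r : ℝ | ∃ s : Finset (Fin n), s.card = k ∧ r = opNorm (principalSub P s)} := by
  classical
  haveI : NeZero n := ⟨by omega⟩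
  have hsym : ∀ i j : Fin n, P j i = star (P i j) := fun i j => (hP.apply j i).symm ▸ rfl
  have hdiag : ∀ a : Fin n, P a a = ((∑ j, ‖P a j‖ ^ 2 : ℝ) : ℂ) := by
    intro a
    have h1 : P a a = (P * P) a a := by rw [hPproj]
    rw [h1, Matrix.mul_apply, Complex.ofReal_sum]
    apply Finset.sum_congr rfl
    intro j _
    rw [hsym a j, RCLike.star_def, Complex.mul_conj']
    norm_cast
  set dfun : Fin n → ℝ := fun i => (P i i).re with hdfun
  have hdfun_eq : ∀ a, dfun a = ∑ j, ‖P a j‖ ^ 2 := by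
    intro a
    have h := congrArg Complex.re (hdiag a)
    rw [hdfun]
    simpa [← Complex.ofReal_pow] using h
  have hreal : ∀ a : Fin n, P a a = ((dfun a : ℝ) : ℂ) := by
    intro a
    rw [hdiag a, hdfun_eq a]
  have hdfun0 : ∀ a, 0 ≤ dfun a := fun a => (hdfun_eq a) ▸
    Finset.sum_nonneg fun _ _ => sq_nonneg _
  obtain ⟨i₀, _, hmax⟩ := Finset.exists_max_image Finset.univ dfun
    ⟨⟨0, by omega⟩, Finset.mem_univ _⟩
  set d : ℝ := dfun i₀ with hd
  have hmax' : ∀ a : Fin n, dfun a ≤ d := fun a => hmax a (Finset.mem_univ a)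
  have hd0 : 0 ≤ d := hdfun0 i₀
  have hnormd : ‖P i₀ i₀‖ = d := by
    rw [hreal i₀, Complex.norm_real, Real.norm_eq_abs, abs_of_nonneg hd0]
  have hdpos : 0 < d := by
    obtain ⟨a, b, hab⟩ : ∃ a b, P a b ≠ 0 := by
      by_contra hcon
      push_neg at hcon
      exact hPne (by ext a b; exact hcon a b)
    have h1 : (0:ℝ) < ‖P a b‖ ^ 2 := by
      have := norm_pos_iff.mpr hab
      positivity
    have h2 : ‖P a b‖ ^ 2 ≤ dfun a := by
      rw [hdfun_eq a]
      exact Finset.single_le_sum (fun j _ => sq_nonneg ‖P a j‖) (Finset.mem_univ b)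
    exact lt_of_lt_of_le h1 (h2.trans (hmax' a))
  have hd1 : d ≤ 1 := by
    have h1 : ‖P i₀ i₀‖ ^ 2 ≤ d := by
      rw [hd, hdfun_eq i₀]
      exact Finset.single_le_sum (fun j _ => sq_nonneg ‖P i₀ j‖) (Finset.mem_univ i₀)
    nlinarith [hnormd]
  -- the column vector u
  set u : Fin n → ℂ := fun i => P i i₀ with hu
  have hunorm : ∀ i, ‖u i‖ = ‖P i₀ i‖ := by
    intro i
    rw [hu]
    simp only
    rw [hsym i₀ i]
    exact norm_star _
  have husum : ∑ i, ‖u i‖ ^ 2 = d := by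
    rw [hd, hdfun_eq i₀]
    exact Finset.sum_congr rfl fun i _ => by rw [hunorm i]
  have hui₀ : ‖u i₀‖ ^ 2 = d ^ 2 := by
    rw [show ‖u i₀‖ = d from hnormd]
  -- selection of the subset
  set T : Finset (Fin n) := Finset.univ.erase i₀ with hT
  have hTcard : T.card = n - 1 := by
    rw [hT, Finset.card_erase_of_mem (Finset.mem_univ _), Finset.card_univ, Fintype.card_fin]
  have hTsum : ∑ i ∈ T, ‖u i‖ ^ 2 = d - d ^ 2 := by
    have h := Finset.sum_erase_add Finset.univ (fun i => ‖u i‖ ^ 2) (Finset.mem_univ i₀)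
    rw [husum] at h
    have h' : ∑ i ∈ T, ‖u i‖ ^ 2 + ‖u i₀‖ ^ 2 = d := by simpa [hT] using h
    linarith [hui₀ ▸ h']
  have hn1pos : (0:ℝ) < (n:ℝ) - 1 := by
    have : (2:ℝ) ≤ (n:ℝ) := by exact_mod_cast hn
    linarith
  have hk1T : k - 1 ≤ T.card := by rw [hTcard]; omega
  obtain ⟨s', hs'T, hs'card, hs'⟩ := select_lemma (k-1) T (fun i => ‖u i‖ ^ 2)
    (fun i _ => sq_nonneg _) hk1T
  have hi₀s' : i₀ ∉ s' := fun h => Finset.notMem_erase i₀ _ (hs'T h)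
  set s : Finset (Fin n) := insert i₀ s' with hsdef
  have hscard : s.card = k := by
    rw [hsdef, Finset.card_insert_of_notMem hi₀s', hs'card]
    omega
  have hi₀s : i₀ ∈ s := Finset.mem_insert_self _ _
  set t : ℝ := ((k:ℝ) - 1)/((n:ℝ) - 1) with ht
  have hcast1 : (((k - 1 : ℕ)) : ℝ) = (k:ℝ) - 1 := by
    rw [Nat.cast_sub hk]; norm_num
  have hcast2 : ((T.card : ℕ) : ℝ) = (n:ℝ) - 1 := by
    rw [hTcard, Nat.cast_sub (by omega : 1 ≤ n)]; norm_num
  set ms : ℝ := ∑ i ∈ s, ‖u i‖ ^ 2 with hms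
  have hs'0 : 0 ≤ ∑ i ∈ s', ‖u i‖ ^ 2 := Finset.sum_nonneg fun _ _ => sq_nonneg _
  have hms_eq : ms = d ^ 2 + ∑ i ∈ s', ‖u i‖ ^ 2 := by
    rw [hms, hsdef, Finset.sum_insert hi₀s', hui₀]
  have hsel : t * (d - d ^ 2) ≤ ∑ i ∈ s', ‖u i‖ ^ 2 := by
    rw [hcast1, hcast2, hTsum] at hs'
    rw [ht, div_mul_eq_mul_div, div_le_iff₀ hn1pos]
    linarith [hs']
  have hms_ge : d * (d + t * (1 - d)) ≤ ms := by
    rw [hms_eq]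
    nlinarith [hsel]
  have hmspos : 0 < ms := by
    rw [hms_eq]
    nlinarith
  -- subtype computations
  haveI hne : Nonempty {i // i ∈ s} := ⟨⟨i₀, hi₀s⟩⟩
  set x : {i // i ∈ s} → ℂ := fun i => u i with hx
  set xt : Fin n → ℂ := fun i => if i ∈ s then u i else 0 with hxt
  have hsum_x : ∑ i, ‖x i‖ ^ 2 = ms := by
    rw [hms, hx]
    exact Finset.sum_coe_sort s (fun i => ‖u i‖ ^ 2)
  have hPxt : ∀ i : Fin n, (P *ᵥ xt) i = ∑ j ∈ s, P i j * u j := by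
    intro i
    show (fun j => P i j) ⬝ᵥ xt = _
    rw [dotProduct]
    rw [← Finset.sum_subset (Finset.subset_univ s)
      (fun j _ hj => by rw [hxt]; simp [hj])]
    exact Finset.sum_congr rfl fun j hj => by rw [hxt]; simp [hj]
  have hQa : star x ⬝ᵥ (principalSub P s *ᵥ x)
      = ∑ i ∈ s, (starRingEnd ℂ) (u i) * ∑ j ∈ s, P i j * u j := by
    rw [dotProduct]
    rw [← Finset.sum_coe_sort s (fun i => (starRingEnd ℂ) (u i) * ∑ j ∈ s, P i j * u j)]
    apply Finset.sum_congr rfl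
    intro i _
    congr 1
    show ((principalSub P s) *ᵥ x) i = ∑ j ∈ s, P i j * u j
    show (fun j => principalSub P s i j) ⬝ᵥ x = _
    rw [dotProduct]
    rw [← Finset.sum_coe_sort s (fun j => P (i : Fin n) j * u j)]
    exact Finset.sum_congr rfl fun j _ => rfl
  have hQb : star xt ⬝ᵥ (P *ᵥ xt)
      = ∑ i ∈ s, (starRingEnd ℂ) (u i) * ∑ j ∈ s, P i j * u j := by
    rw [dotProduct]
    rw [← Finset.sum_subset (Finset.subset_univ s)
      (fun i _ hi => by rw [hxt]; simp [hi])]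
    apply Finset.sum_congr rfl
    intro i hi
    rw [hPxt i, hxt]
    simp [hi]
  set w : Fin n → ℂ := P *ᵥ xt with hw
  have hQw : star xt ⬝ᵥ (P *ᵥ xt) = star w ⬝ᵥ w := by
    conv_lhs => rw [← hPproj]
    rw [← mulVec_mulVec, dotProduct_mulVec]
    congr 1
    calc star xt ᵥ* P = star xt ᵥ* Pᴴ := by rw [hP.eq]
      _ = star (P *ᵥ xt) := (star_mulVec _ _).symm
      _ = star w := by rw [hw]
  have hQre : (star xt ⬝ᵥ (P *ᵥ xt)).re = ∑ i, ‖w i‖ ^ 2 := by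
    rw [hQw, dot_self']
    exact Complex.ofReal_re _
  have hwnonneg : 0 ≤ ∑ i, ‖w i‖ ^ 2 := Finset.sum_nonneg fun _ _ => sq_nonneg _
  have hPu : P *ᵥ u = u := by
    ext i
    show (fun j => P i j) ⬝ᵥ u = u i
    rw [dotProduct]
    have h2 : ∑ j, P i j * P j i₀ = (P * P) i i₀ := (Matrix.mul_apply).symm
    rw [hu]
    simp only
    rw [h2, hPproj]
  have hudot : star u ⬝ᵥ w = star u ⬝ᵥ xt := by
    rw [hw, dotProduct_mulVec]
    congr 1
    calc star u ᵥ* P = star u ᵥ* Pᴴᴴ := by rw [conjTranspose_conjTranspose]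
      _ = star (Pᴴ *ᵥ u) := (star_mulVec _ _).symm
      _ = star (P *ᵥ u) := by rw [hP.eq]
      _ = star u := by rw [hPu]
  have hms_c : star u ⬝ᵥ xt = ((ms : ℝ) : ℂ) := by
    rw [dotProduct]
    rw [← Finset.sum_subset (Finset.subset_univ s)
      (fun i _ hi => by rw [hxt]; simp [hi])]
    rw [hms, Complex.ofReal_sum]
    apply Finset.sum_congr rfl
    intro i hi
    rw [hxt]
    simp only [hi, if_pos]
    rw [Pi.star_apply, RCLike.star_def, Complex.conj_mul']
    norm_cast
  set Q : ℝ := ∑ i, ‖w i‖ ^ 2 with hQdef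
  have hQ0 : 0 ≤ Q := hwnonneg
  have hCS : ms ≤ Real.sqrt d * Real.sqrt Q := by
    have h := cauchy_schwarz' u w
    rw [hudot, hms_c, husum] at h
    have hnms : ‖((ms : ℝ) : ℂ)‖ = ms := by
      rw [Complex.norm_real, Real.norm_eq_abs, abs_of_pos hmspos]
    rw [hnms] at h
    exact h
  have hms2 : ms ^ 2 ≤ d * Q := by
    have h2 : (Real.sqrt d * Real.sqrt Q) ^ 2 = d * Q := by
      rw [mul_pow, Real.sq_sqrt hd0, Real.sq_sqrt hQ0]
    have h3 : ms ^ 2 ≤ (Real.sqrt d * Real.sqrt Q) ^ 2 :=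
      pow_le_pow_left₀ (le_of_lt hmspos) hCS 2
    rwa [h2] at h3
  have hqb := re_quad_le_opNorm (principalSub P s) x
  rw [hsum_x] at hqb
  set oN : ℝ := opNorm (principalSub P s) with hoN
  have hQB : Q ≤ oN * ms := by
    rw [← hQre, hQb, ← hQa]
    exact hqb
  have hfinal : d + t * (1 - d) ≤ oN := by
    have h1 : ms ^ 2 ≤ d * (oN * ms) :=
      hms2.trans (mul_le_mul_of_nonneg_left hQB hd0)
    have h2 : ms ≤ d * oN := by
      have h1' : ms * ms ≤ (d * oN) * ms := by
        rw [← mul_assoc] at h1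
        rw [pow_two] at h1
        exact h1
      exact le_of_mul_le_mul_right h1' hmspos
    have h3 : d * (d + t * (1 - d)) ≤ d * oN := le_trans hms_ge h2
    exact le_of_mul_le_mul_left h3 hdpos
  have hbdd : BddAbove {r : ℝ | ∃ s : Finset (Fin n), s.card = k ∧ r = opNorm (principalSub P s)} := by
    apply Set.Finite.bddAbove
    apply Set.Finite.subset (Set.finite_range (fun s₁ : Finset (Fin n) => opNorm (principalSub P s₁)))
    rintro r ⟨s₁, _, rfl⟩
    exact ⟨s₁, rfl⟩
  have hSk : d + t * (1 - d)
      ≤ sSup {r : ℝ | ∃ s : Finset (Fin n), s.card = k ∧ r = opNorm (principalSub P s)} :=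
    hfinal.trans (le_csSup hbdd ⟨s, hscard, rfl⟩)
  have hS1 : sSup {r : ℝ | ∃ s : Finset (Fin n), s.card = 1 ∧ r = opNorm (principalSub P s)} ≤ d := by
    apply Real.sSup_le _ hd0
    rintro r ⟨s₁, hcard1, rfl⟩
    obtain ⟨a, rfl⟩ := Finset.card_eq_one.mp hcard1
    have huniq : ∀ b : {i // i ∈ ({a} : Finset (Fin n))}, b = ⟨a, Finset.mem_singleton_self a⟩ :=
      fun b => Subtype.ext (Finset.mem_singleton.mp b.2)
    have h := opNorm_card_one_le (principalSub P {a}) ⟨a, Finset.mem_singleton_self a⟩ huniq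
    have heq : ‖principalSub P {a} ⟨a, Finset.mem_singleton_self a⟩
        ⟨a, Finset.mem_singleton_self a⟩‖ = dfun a := by
      show ‖P a a‖ = dfun a
      rw [hreal a, Complex.norm_real, Real.norm_eq_abs, abs_of_nonneg (hdfun0 a)]
    rw [heq] at h
    exact h.trans (hmax' a)
  have ht0 : 0 ≤ t := by
    apply div_nonneg _ (le_of_lt hn1pos)
    have h1 : (1:ℝ) ≤ (k:ℝ) := by exact_mod_cast hk
    linarith
  have ht1 : t ≤ 1 := by
    rw [ht, div_le_one hn1pos]
    have h1 : (k:ℝ) ≤ (n:ℝ) := by exact_mod_cast hkn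
    linarith
  exact final_arith hS1 hSk ht1
end
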